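/- arXiv:1602.01070 — 8 statements merged into one kernel-verified Lean document; each statement's English description precedes it below -/
import Mathlib

section
/- Suppose AE(U) < 1. Then there exist y₀ > 0 and γ ∈ (0,1) such that for every y with 0 < y < y₀ one has y·I(y) < (γ/(1−γ))·V(y), and moreover V(β·y) < β^{−γ/(1−γ)}·V(y) for every y with 0 < y < y₀ and every β with 0 < β < 1. -/
open Filter Set Topology

/-- Under reasonable asymptotic elasticity `AE(U) < 1`, there exist `y₀ > 0` and
`γ ∈ (0,1)` such that `y·I(y) < (γ/(1−γ))·V(y)` for all `0 < y < y₀`, and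
`V(β·y) < β^{−γ/(1−γ)}·V(y)` for all `0 < y < y₀` and `0 < β < 1`. -/
theorem utility_dual_asymptotic_elasticity_estimates
    (U U' V I : ℝ → ℝ)
    (hU_incr : StrictMonoOn U (Set.Ioi 0))
    (hU_conc : StrictConcaveOn ℝ (Set.Ioi 0) U)
    (hU_deriv : ∀ x ∈ Set.Ioi (0:ℝ), HasDerivAt U (U' x) x)
    (hU'_cont : ContinuousOn U' (Set.Ioi 0))
    (hInada_zero : Filter.Tendsto U' (nhdsWithin 0 (Set.Ioi 0)) Filter.atTop)
    (hInada_inf : Filter.Tendsto U' Filter.atTop (nhds 0))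
    (hU_pos : ∃ x > 0, 0 < U x)
    (hV : ∀ y > 0, IsLUB {z : ℝ | ∃ x > 0, z = U x - x * y} (V y))
    (hI_pos : ∀ y > 0, 0 < I y)
    (hI_left : ∀ y > 0, U' (I y) = y)
    (hI_right : ∀ x > 0, I (U' x) = x)
    (hAE : Filter.limsup (fun x => x * U' x / U x) Filter.atTop < 1) :
    ∃ y₀ > 0, ∃ γ : ℝ, 0 < γ ∧ γ < 1 ∧
      (∀ y, 0 < y → y < y₀ → y * I y < γ / (1 - γ) * V y) ∧
      (∀ y, 0 < y → y < y₀ → ∀ β : ℝ, 0 < β → β < 1 →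
        V (β * y) < β ^ (-(γ / (1 - γ))) * V y) := by
  -- U' is positive on (0,∞)
  have hU'pos : ∀ x : ℝ, 0 < x → 0 < U' x := by
    intro x hx
    have h1 : slope U x (x + 1) < U' x :=
      hU_conc.slope_lt_of_hasDerivAt (mem_Ioi.2 hx) (mem_Ioi.2 (by linarith))
        (by linarith) (hU_deriv x hx)
    have h2 : 0 < slope U x (x + 1) := by
      rw [slope_def_field]
      have := hU_incr (mem_Ioi.2 hx) (mem_Ioi.2 (by linarith : (0:ℝ) < x + 1)) (by linarith)
      apply div_pos (by linarith) (by linarith)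
    linarith
  -- tangent line inequality
  have htangent : ∀ a x : ℝ, 0 < a → 0 < x → U x ≤ U a + U' a * (x - a) := by
    intro a x ha hx
    rcases lt_trichotomy x a with h | h | h
    · have h1 : U' a < slope U x a :=
        hU_conc.lt_slope_of_hasDerivAt (mem_Ioi.2 hx) (mem_Ioi.2 ha) h (hU_deriv a ha)
      rw [slope_def_field, lt_div_iff₀ (by linarith : (0:ℝ) < a - x)] at h1
      nlinarith
    · simp [h]
    · have h1 : slope U a x < U' a :=
        hU_conc.slope_lt_of_hasDerivAt (mem_Ioi.2 ha) (mem_Ioi.2 hx) h (hU_deriv a ha)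
      rw [slope_def_field, div_lt_iff₀ (by linarith : (0:ℝ) < x - a)] at h1
      nlinarith
  -- U' strictly decreasing
  have hU'anti : ∀ x y : ℝ, 0 < x → x < y → U' y < U' x := by
    intro x y hx hxy
    have hy : (0:ℝ) < y := lt_trans hx hxy
    have h1 : U' y < slope U x y :=
      hU_conc.lt_slope_of_hasDerivAt (mem_Ioi.2 hx) (mem_Ioi.2 hy) hxy (hU_deriv y hy)
    have h2 : slope U x y < U' x :=
      hU_conc.slope_lt_of_hasDerivAt (mem_Ioi.2 hx) (mem_Ioi.2 hy) hxy (hU_deriv x hx)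
    linarith
  -- U monotone (non-strict)
  have hUmono : ∀ a b : ℝ, 0 < a → a ≤ b → U a ≤ U b := by
    intro a b ha hab
    rcases eq_or_lt_of_le hab with rfl | h
    · exact le_refl _
    · exact (hU_incr (mem_Ioi.2 ha) (mem_Ioi.2 (lt_trans ha h)) h).le
  -- I strictly decreasing
  have hIanti : ∀ y z : ℝ, 0 < y → y < z → I z < I y := by
    intro y z hy hyz
    have hz : (0:ℝ) < z := lt_trans hy hyz
    by_contra hcon
    push_neg at hcon
    rcases eq_or_lt_of_le hcon with he | hl
    · have e1 := hI_left y hy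
      have e2 := hI_left z hz
      rw [← he] at e2
      rw [e1] at e2
      linarith
    · have := hU'anti (I y) (I z) (hI_pos y hy) hl
      rw [hI_left y hy, hI_left z hz] at this
      linarith
  -- formula for V
  have hVform : ∀ y : ℝ, 0 < y → V y = U (I y) - y * I y := by
    intro y hy
    have hmem : U (I y) - y * I y ∈ {z : ℝ | ∃ x > 0, z = U x - x * y} :=
      ⟨I y, hI_pos y hy, by ring⟩
    have hub : (U (I y) - y * I y) ∈ upperBounds {z : ℝ | ∃ x > 0, z = U x - x * y} := by
      rintro z ⟨x, hx, rfl⟩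
      have ht := htangent (I y) x (hI_pos y hy) hx
      rw [hI_left y hy] at ht
      nlinarith
    exact (hV y hy).unique ⟨hub, fun b hb => hb hmem⟩
  -- subgradient inequality
  have hVsub : ∀ y z : ℝ, 0 < y → 0 < z → V y - I y * (z - y) ≤ V z := by
    intro y z hy hz
    have h1 : U (I y) - (I y) * z ≤ V z := (hV z hz).1 ⟨I y, hI_pos y hy, rfl⟩
    rw [hVform y hy]
    linarith
  -- continuity of I within (0,∞)
  have hIt : ∀ y : ℝ, 0 < y → Tendsto I (𝓝[≠] y) (𝓝 (I y)) := by
    intro y hy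
    have hsub : 𝓝[≠] y ≤ 𝓝[Ioi 0] y := by
      rw [nhdsWithin_restrict' ({y}ᶜ) (Ioi_mem_nhds hy)]
      exact nhdsWithin_mono y inter_subset_right
    refine Tendsto.mono_left ?_ hsub
    rw [Metric.tendsto_nhdsWithin_nhds]
    intro ε hε
    set a := I y with ha_def
    have ha : 0 < a := hI_pos y hy
    set ε' := min ε (a / 2) with hε'_def
    have hε' : 0 < ε' := lt_min hε (by linarith)
    have hε'a : ε' < a := lt_of_le_of_lt (min_le_right _ _) (by linarith)
    have haub : 0 < a - ε' := by linarith
    have h1 : U' (a + ε') < y := by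
      have := hU'anti a (a + ε') ha (by linarith)
      rwa [show U' a = y from hI_left y hy] at this
    have h2 : y < U' (a - ε') := by
      have := hU'anti (a - ε') a haub (by linarith)
      rwa [show U' a = y from hI_left y hy] at this
    refine ⟨min (y - U' (a + ε')) (U' (a - ε') - y),
      lt_min (by linarith) (by linarith), ?_⟩
    intro z hz hdz
    rw [Real.dist_eq] at hdz
    have habs := abs_lt.1 hdz
    have hm1 := min_le_left (y - U' (a + ε')) (U' (a - ε') - y)
    have hm2 := min_le_right (y - U' (a + ε')) (U' (a - ε') - y)
    have hz1 : U' (a + ε') < z := by linarith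
    have hz2 : z < U' (a - ε') := by linarith
    have hU'pos1 : 0 < U' (a + ε') := hU'pos _ (by linarith)
    have hIz1 : I z < a + ε' := by
      have := hIanti (U' (a + ε')) z hU'pos1 hz1
      rwa [hI_right (a + ε') (by linarith)] at this
    have hIz2 : a - ε' < I z := by
      have := hIanti z (U' (a - ε')) hz hz2
      rwa [hI_right (a - ε') haub] at this
    rw [Real.dist_eq, abs_lt]
    have hεε : ε' ≤ ε := min_le_left _ _
    constructor <;> [linarith; linarith]
  -- V is differentiable with derivative -I
  have hVd : ∀ y : ℝ, 0 < y → HasDerivAt V (-(I y)) y := by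
    intro y hy
    rw [hasDerivAt_iff_tendsto_slope]
    have hmemIoi : ∀ᶠ z in 𝓝[≠] y, z ∈ Ioi (0:ℝ) := by
      apply eventually_nhdsWithin_of_eventually_nhds
      exact eventually_of_mem (Ioi_mem_nhds hy) (fun z hz => hz)
    have hne : ∀ᶠ z in 𝓝[≠] y, z ≠ y := by
      filter_upwards [self_mem_nhdsWithin] with z hz
      exact hz
    have hbound : ∀ᶠ z in 𝓝[≠] y, |slope V y z - (-(I y))| ≤ |I z - I y| := by
      filter_upwards [hmemIoi, hne] with z hz hzy
      have hz0 : (0:ℝ) < z := hz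
      have e1 := hVsub y z hy hz0
      have e2 := hVsub z y hz0 hy
      rw [slope_def_field]
      rcases lt_or_gt_of_ne hzy with h | h
      · -- z < y
        have hd : (0:ℝ) < y - z := by linarith
        have heq : (V z - V y) / (z - y) = (V y - V z) / (y - z) := by
          rw [div_eq_div_iff (by linarith) (by linarith)]; ring
        rw [heq]
        have s1 : (V y - V z) / (y - z) ≤ -(I y) := by
          rw [div_le_iff₀ hd]; nlinarith
        have s2 : -(I z) ≤ (V y - V z) / (y - z) := by
          rw [le_div_iff₀ hd]; nlinarith
        rw [abs_le]
        have ha1 := le_abs_self (I z - I y)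
        have ha2 := abs_nonneg (I z - I y)
        constructor
        · linarith
        · linarith
      · -- y < z
        have hd : (0:ℝ) < z - y := by linarith
        have s1 : -(I y) ≤ (V z - V y) / (z - y) := by
          rw [le_div_iff₀ hd]; nlinarith
        have s2 : (V z - V y) / (z - y) ≤ -(I z) := by
          rw [div_le_iff₀ hd]; nlinarith
        rw [abs_le]
        have ha1 : I y - I z ≤ |I z - I y| := by
          rw [abs_sub_comm]; exact le_abs_self _
        have ha2 := abs_nonneg (I z - I y)
        constructor
        · linarith
        · linarith
    have htends : Tendsto (fun z => |I z - I y|) (𝓝[≠] y) (𝓝 0) := by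
      have h0 : Tendsto (fun z => I z - I y) (𝓝[≠] y) (𝓝 (I y - I y)) :=
        (hIt y hy).sub tendsto_const_nhds
      rw [sub_self] at h0
      simpa using h0.abs
    rw [tendsto_iff_dist_tendsto_zero]
    apply squeeze_zero' (Eventually.of_forall fun z => dist_nonneg) ?_ htends
    filter_upwards [hbound] with z hz
    rw [Real.dist_eq]
    exact hz
  -- positivity of U eventually
  obtain ⟨x₁, hx₁pos, hx₁U⟩ := hU_pos
  have hUposlater : ∀ x : ℝ, x₁ ≤ x → 0 < U x :=
    fun x hx => lt_of_lt_of_le hx₁U (hUmono x₁ x hx₁pos hx)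
  -- boundedness of elasticity
  have hbd : ∀ x : ℝ, 2 * x₁ ≤ x → x * U' x / U x ≤ 2 := by
    intro x hx
    have hxpos : 0 < x := by linarith
    have hx2 : 0 < x / 2 := by linarith
    have ht := htangent x (x / 2) hxpos hx2
    have hU2 : 0 < U (x / 2) := hUposlater _ (by linarith)
    have hUx : 0 < U x := hUposlater x (by linarith)
    rw [div_le_iff₀ hUx]
    nlinarith
  have hIsBdd : IsBoundedUnder (· ≤ ·) atTop (fun x => x * U' x / U x) :=
    isBoundedUnder_of_eventually_le (eventually_atTop.2 ⟨2 * x₁, hbd⟩)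
  -- choice of γ
  set L := limsup (fun x => x * U' x / U x) atTop with hLdef
  set γ := (max L 0 + 1) / 2 with hγdef
  have hmax1 : max L 0 < 1 := max_lt hAE one_pos
  have hγ0 : 0 < γ := by
    have := le_max_right L 0
    rw [hγdef]; linarith
  have hγ1 : γ < 1 := by rw [hγdef]; linarith
  have hLγ : L < γ := by
    have := le_max_left L 0
    rw [hγdef]; linarith
  have hev : ∀ᶠ x in atTop, x * U' x / U x < γ :=
    eventually_lt_of_limsup_lt hLγ hIsBdd
  obtain ⟨x₂, hx₂⟩ := eventually_atTop.1 hev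
  set x₀ := max (max x₂ (2 * x₁)) 1 with hx₀def
  have hx₀pos : (0:ℝ) < x₀ := lt_of_lt_of_le one_pos (le_max_right _ _)
  have hx₀key : ∀ x : ℝ, x₀ ≤ x → x * U' x < γ * U x ∧ 0 < U x := by
    intro x hx
    have h1 : x₂ ≤ x := le_trans (le_trans (le_max_left _ _) (le_max_left _ _)) hx
    have h2 : 2 * x₁ ≤ x := le_trans (le_trans (le_max_right _ _) (le_max_left _ _)) hx
    have hUx : 0 < U x := hUposlater x (by linarith)
    have := hx₂ x h1
    rw [div_lt_iff₀ hUx] at this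
    exact ⟨by linarith, hUx⟩
  set y₀ := U' x₀ with hy₀def
  have hy₀pos : 0 < y₀ := hU'pos x₀ hx₀pos
  have h1γ : (0:ℝ) < 1 - γ := by linarith
  -- the key inequality
  have hkey : ∀ y : ℝ, 0 < y → y < y₀ → 0 < V y ∧ y * I y < γ / (1 - γ) * V y := by
    intro y hy hyy₀
    have hIy := hI_pos y hy
    have hx₀Iy : x₀ < I y := by
      have := hIanti y y₀ hy hyy₀
      rwa [hI_right x₀ hx₀pos] at this
    obtain ⟨hineq, _⟩ := hx₀key (I y) hx₀Iy.le
    rw [hI_left y hy] at hineq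
    have hUIy : 0 < U (I y) := by
      have := hUposlater (I y) ?_
      · exact this
      · have : x₁ ≤ 2 * x₁ := by linarith
        have h2 : 2 * x₁ ≤ x₀ := le_trans (le_max_right _ _) (le_max_left _ _)
        linarith
    have hVf := hVform y hy
    have hVpos : 0 < V y := by rw [hVf]; nlinarith
    refine ⟨hVpos, ?_⟩
    rw [div_mul_eq_mul_div, lt_div_iff₀ h1γ]
    nlinarith
  -- second inequality via log-derivative argument
  set α := γ / (1 - γ) with hαdef
  have hαpos : 0 < α := div_pos hγ0 h1γ
  set G := fun y => Real.log (V y) + α * Real.log y with hGdef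
  have hGd : ∀ y ∈ Ioo (0:ℝ) y₀, HasDerivAt G (-(I y) / V y + α * y⁻¹) y := by
    intro y hy
    obtain ⟨hVpos, _⟩ := hkey y hy.1 hy.2
    exact ((hVd y hy.1).log (ne_of_gt hVpos)).add
      ((Real.hasDerivAt_log (ne_of_gt hy.1)).const_mul α)
  have hGmono : StrictMonoOn G (Ioo 0 y₀) := by
    apply strictMonoOn_of_deriv_pos (convex_Ioo _ _)
    · intro y hy
      exact (hGd y hy).continuousAt.continuousWithinAt
    · intro y hy
      rw [interior_Ioo] at hy
      rw [(hGd y hy).deriv]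
      obtain ⟨hVpos, hk2⟩ := hkey y hy.1 hy.2
      have h2 : I y / V y < α / y := by
        rw [div_lt_div_iff₀ hVpos hy.1]
        nlinarith
      rw [neg_div]
      have h3 : α * y⁻¹ = α / y := by rw [div_eq_mul_inv]
      linarith
  refine ⟨y₀, hy₀pos, γ, hγ0, hγ1, fun y hy hyy₀ => (hkey y hy hyy₀).2, ?_⟩
  intro y hy hyy₀ β hβ0 hβ1
  have hβy : β * y < y := by nlinarith
  have hβypos : 0 < β * y := mul_pos hβ0 hy
  have hmemy : y ∈ Ioo (0:ℝ) y₀ := ⟨hy, hyy₀⟩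
  have hmemβy : β * y ∈ Ioo (0:ℝ) y₀ := ⟨hβypos, lt_trans hβy hyy₀⟩
  have hGlt := hGmono hmemβy hmemy hβy
  simp only [hGdef] at hGlt
  have hlogβy : Real.log (β * y) = Real.log β + Real.log y :=
    Real.log_mul (ne_of_gt hβ0) (ne_of_gt hy)
  have hVβpos := (hkey (β * y) hβypos hmemβy.2).1
  have hVypos := (hkey y hy hyy₀).1
  have hstep : Real.log (V (β * y)) < Real.log (V y) + Real.log β * (-α) := by
    rw [hlogβy] at hGlt
    nlinarith
  calc V (β * y) = Real.exp (Real.log (V (β * y))) := (Real.exp_log hVβpos).symm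
    _ < Real.exp (Real.log (V y) + Real.log β * (-α)) := Real.exp_lt_exp.2 hstep
    _ = Real.exp (Real.log (V y)) * Real.exp (Real.log β * (-α)) := Real.exp_add _ _
    _ = V y * β ^ (-α) := by rw [Real.exp_log hVypos, ← Real.rpow_def_of_pos hβ0]
    _ = β ^ (-α) * V y := mul_comm _ _
end

section
/- The convex conjugate V is strictly decreasing, strictly convex and continuously differentiable on (0,∞); its derivative satisfies V'(y) = −I(y) for every y > 0; and lim_{y→0+} V(y) = lim_{x→∞} U(x) (in (0,∞]) while lim_{y→∞} V(y) = lim_{x→0+} U(x) (in [−∞,∞)). -/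
open Filter Set Topology

/-- The convex conjugate `V` of `U` is strictly decreasing, strictly convex and
continuously differentiable on `(0,∞)` with `V'(y) = −I(y)`; moreover
`lim_{y→0+} V(y) = lim_{x→∞} U(x)` (a value `L ∈ (0,∞]`) and
`lim_{y→∞} V(y) = lim_{x→0+} U(x)` (a value `M ∈ [−∞,∞)`). -/
theorem convex_conjugate_properties
    (U U' V I : ℝ → ℝ)
    (hU_incr : StrictMonoOn U (Set.Ioi 0))
    (hU_conc : StrictConcaveOn ℝ (Set.Ioi 0) U)
    (hU_deriv : ∀ x ∈ Set.Ioi (0:ℝ), HasDerivAt U (U' x) x)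
    (hU'_cont : ContinuousOn U' (Set.Ioi 0))
    (hInada_zero : Filter.Tendsto U' (nhdsWithin 0 (Set.Ioi 0)) Filter.atTop)
    (hInada_inf : Filter.Tendsto U' Filter.atTop (nhds 0))
    (hU_pos : ∃ x > 0, 0 < U x)
    (hV : ∀ y > 0, IsLUB {z : ℝ | ∃ x > 0, z = U x - x * y} (V y))
    (hI_pos : ∀ y > 0, 0 < I y)
    (hI_left : ∀ y > 0, U' (I y) = y)
    (hI_right : ∀ x > 0, I (U' x) = x) :
    StrictAntiOn V (Set.Ioi 0) ∧
    StrictConvexOn ℝ (Set.Ioi 0) V ∧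
    (∀ y ∈ Set.Ioi (0:ℝ), HasDerivAt V (-(I y)) y) ∧
    ContinuousOn (fun y => -(I y)) (Set.Ioi 0) ∧
    (∃ L : EReal, 0 < L ∧
      Filter.Tendsto (fun x => (U x : EReal)) Filter.atTop (nhds L) ∧
      Filter.Tendsto (fun y => (V y : EReal)) (nhdsWithin 0 (Set.Ioi 0)) (nhds L)) ∧
    (∃ M : EReal, M < ⊤ ∧
      Filter.Tendsto (fun x => (U x : EReal)) (nhdsWithin 0 (Set.Ioi 0)) (nhds M) ∧
      Filter.Tendsto (fun y => (V y : EReal)) Filter.atTop (nhds M)) := by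
  -- strict tangent-line inequality for the concave function U
  have htang : ∀ x ∈ Set.Ioi (0:ℝ), ∀ z ∈ Set.Ioi (0:ℝ), z ≠ x →
      U z < U x + U' x * (z - x) := by
    intro x hx z hz hne
    have hconv : StrictConvexOn ℝ (Set.Ioi (0:ℝ)) (-U) := hU_conc.neg
    have hd : HasDerivAt (-U) (-(U' x)) x := (hU_deriv x hx).neg
    rcases hne.lt_or_gt with h | h
    · have h1 := hconv.slope_lt_of_hasDerivAt hz hx h hd
      rw [slope_def_field] at h1
      have hxz : 0 < x - z := by linarith
      rw [div_lt_iff₀ hxz] at h1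
      simp only [Pi.neg_apply] at h1
      nlinarith
    · have h1 := hconv.lt_slope_of_hasDerivAt hx hz h hd
      rw [slope_def_field] at h1
      have hxz : 0 < z - x := by linarith
      rw [lt_div_iff₀ hxz] at h1
      simp only [Pi.neg_apply] at h1
      nlinarith
  have hU'anti : StrictAntiOn U' (Set.Ioi 0) := by
    intro a ha b hb hab
    have h1 := htang a ha b hb (ne_of_gt hab)
    have h2 := htang b hb a ha (ne_of_lt hab)
    nlinarith
  have hU'pos : ∀ x ∈ Set.Ioi (0:ℝ), 0 < U' x := by
    intro x hx
    have hx' : (0:ℝ) < x := hx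
    have h1 := htang x hx (x+1) (by simp only [Set.mem_Ioi]; linarith) (by linarith)
    have h2 := hU_incr hx (by simp only [Set.mem_Ioi]; linarith) (lt_add_one x)
    nlinarith
  have hVmem : ∀ y > (0:ℝ), ∀ x > (0:ℝ), U x - x * y ≤ V y := by
    intro y hy x hx
    exact (hV y hy).1 ⟨x, hx, rfl⟩
  have hVlt : ∀ y > (0:ℝ), ∀ x > (0:ℝ), x ≠ I y → U x - x * y < U (I y) - I y * y := by
    intro y hy x hx hne
    have h := htang (I y) (hI_pos y hy) x hx hne
    rw [hI_left y hy] at h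
    nlinarith
  have hVeq : ∀ y > (0:ℝ), V y = U (I y) - I y * y := by
    intro y hy
    refine le_antisymm ?_ (hVmem y hy _ (hI_pos y hy))
    refine (hV y hy).2 ?_
    rintro z ⟨x, hx, rfl⟩
    rcases eq_or_ne x (I y) with rfl | hne
    · exact le_refl _
    · exact le_of_lt (hVlt y hy x hx hne)
  -- V is strictly decreasing
  have hVanti : StrictAntiOn V (Set.Ioi 0) := by
    intro y1 h1 y2 h2 h12
    have hy1 : (0:ℝ) < y1 := h1
    have hy2 : (0:ℝ) < y2 := h2
    have hx2 := hI_pos y2 hy2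
    have key : U (I y2) - I y2 * y2 < U (I y2) - I y2 * y1 := by nlinarith
    calc V y2 = U (I y2) - I y2 * y2 := hVeq y2 hy2
      _ < U (I y2) - I y2 * y1 := key
      _ ≤ V y1 := hVmem y1 hy1 _ hx2
  -- V is strictly convex
  have hIinj : ∀ y > (0:ℝ), ∀ y' > (0:ℝ), I y = I y' → y = y' := by
    intro y hy y' hy' h
    rw [← hI_left y hy, ← hI_left y' hy', h]
  have hVconv : StrictConvexOn ℝ (Set.Ioi 0) V := by
    refine ⟨convex_Ioi 0, ?_⟩
    intro y1 h1 y2 h2 hne a b ha hb hab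
    have hy1 : (0:ℝ) < y1 := h1
    have hy2 : (0:ℝ) < y2 := h2
    set y := a * y1 + b * y2 with hydef
    have hy : (0:ℝ) < y := by positivity
    set x := I y with hxdef
    have hx : (0:ℝ) < x := hI_pos y hy
    have hne1 : x ≠ I y1 := by
      intro h
      have := hIinj y hy y1 hy1 h
      apply hne
      have hb' : b * (y2 - y1) = 0 := by nlinarith [this]
      have : y2 - y1 = 0 := by
        rcases mul_eq_zero.1 hb' with h' | h'
        · exact absurd h' (ne_of_gt hb)
        · exact h'
      linarith
    have hne2 : x ≠ I y2 := by
      intro h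
      have := hIinj y hy y2 hy2 h
      apply hne
      have ha' : a * (y1 - y2) = 0 := by nlinarith [this]
      have : y1 - y2 = 0 := by
        rcases mul_eq_zero.1 ha' with h' | h'
        · exact absurd h' (ne_of_gt ha)
        · exact h'
      linarith
    have k1 : U x - x * y1 < V y1 := by
      rw [hVeq y1 hy1]; exact hVlt y1 hy1 x hx hne1
    have k2 : U x - x * y2 < V y2 := by
      rw [hVeq y2 hy2]; exact hVlt y2 hy2 x hx hne2
    have hVy : V (a • y1 + b • y2) = U x - x * y := by
      simp only [smul_eq_mul]
      exact hVeq y hy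
    rw [hVy]
    simp only [smul_eq_mul]
    have hxy : x * y = a * (x * y1) + b * (x * y2) := by rw [hydef]; ring
    have hUx : a * U x + b * U x = U x := by rw [← add_mul, hab, one_mul]
    have p1 := mul_lt_mul_of_pos_left k1 ha
    have p2 := mul_lt_mul_of_pos_left k2 hb
    have e1 : a * (U x - x * y1) = a * U x - a * (x * y1) := by ring
    have e2 : b * (U x - x * y2) = b * U x - b * (x * y2) := by ring
    rw [e1] at p1
    rw [e2] at p2
    linarith
  -- continuity of I
  have hIcontAt : ∀ y ∈ Set.Ioi (0:ℝ), ContinuousAt I y := by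
    intro y hy
    have hy' : (0:ℝ) < y := hy
    have hUIy : U' (I y) = y := hI_left y hy'
    rw [Metric.continuousAt_iff]
    intro ε hε
    have ha : 0 < I y := hI_pos y hy'
    set ε' := min (ε/2) (I y/2) with hε'def
    have hε'pos : 0 < ε' := lt_min (by linarith) (by linarith)
    have hε'a : ε' ≤ I y/2 := min_le_right _ _
    have hε'ε : ε' ≤ ε/2 := min_le_left _ _
    have hmem1 : I y + ε' ∈ Set.Ioi (0:ℝ) := Set.mem_Ioi.2 (by linarith)
    have hmem2 : I y - ε' ∈ Set.Ioi (0:ℝ) := Set.mem_Ioi.2 (by linarith)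
    have hmema : I y ∈ Set.Ioi (0:ℝ) := Set.mem_Ioi.2 (by linarith)
    have hlow : U' (I y + ε') < y := by
      have h := hU'anti hmema hmem1 (by linarith)
      rwa [hUIy] at h
    have hhigh : y < U' (I y - ε') := by
      have h := hU'anti hmem2 hmema (by linarith)
      rwa [hUIy] at h
    refine ⟨min (y - U' (I y + ε')) (U' (I y - ε') - y), lt_min (by linarith) (by linarith), ?_⟩
    intro z hz
    rw [Real.dist_eq] at hz
    have habs := abs_lt.1 hz
    have hmin1 := min_le_left (y - U' (I y + ε')) (U' (I y - ε') - y)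
    have hmin2 := min_le_right (y - U' (I y + ε')) (U' (I y - ε') - y)
    have hz1 : U' (I y + ε') < z := by linarith [habs.1]
    have hz2 : z < U' (I y - ε') := by linarith [habs.2]
    have hz0 : 0 < z := lt_trans (hU'pos _ hmem1) hz1
    have hUIz : U' (I z) = z := hI_left z hz0
    have hIzmem : I z ∈ Set.Ioi (0:ℝ) := Set.mem_Ioi.2 (hI_pos z hz0)
    have hIzlt : I z < I y + ε' := by
      by_contra hcon
      push_neg at hcon
      rcases eq_or_lt_of_le hcon with h' | h'
      · rw [h', hUIz] at hz1; exact lt_irrefl _ hz1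
      · have h2 := hU'anti hmem1 hIzmem h'
        rw [hUIz] at h2
        linarith
    have hIzgt : I y - ε' < I z := by
      by_contra hcon
      push_neg at hcon
      rcases eq_or_lt_of_le hcon with h' | h'
      · rw [← h', hUIz] at hz2; exact lt_irrefl _ hz2
      · have h2 := hU'anti hIzmem hmem2 h'
        rw [hUIz] at h2
        linarith
    rw [Real.dist_eq]
    have habs2 : |I z - I y| < ε' := abs_lt.2 ⟨by linarith, by linarith⟩
    linarith
  -- derivative of V
  have hVderiv : ∀ y ∈ Set.Ioi (0:ℝ), HasDerivAt V (-(I y)) y := by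
    intro y hy
    have hy' : (0:ℝ) < y := hy
    rw [hasDerivAt_iff_tendsto_slope]
    rw [tendsto_iff_dist_tendsto_zero]
    have hIt : Tendsto I (𝓝[≠] y) (𝓝 (I y)) :=
      (hIcontAt y hy).mono_left nhdsWithin_le_nhds
    have hIc : Tendsto (fun z => dist (I z) (I y)) (𝓝[≠] y) (𝓝 0) :=
      tendsto_iff_dist_tendsto_zero.1 hIt
    refine squeeze_zero' (Filter.Eventually.of_forall fun z => dist_nonneg) ?_ hIc
    have hev : ∀ᶠ z in 𝓝[≠] y, z ∈ Set.Ioi (0:ℝ) ∧ z ≠ y := by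
      refine Filter.eventually_inf_principal.2 ?_
      filter_upwards [Ioi_mem_nhds hy'] with z hz hz'
      exact ⟨hz, hz'⟩
    filter_upwards [hev] with z ⟨hz0, hzy⟩
    have hz0' : (0:ℝ) < z := hz0
    have A1 : -(I y) * (z - y) ≤ V z - V y := by
      have h1 : U (I y) - I y * z ≤ V z := hVmem z hz0' _ (hI_pos y hy')
      have h2 : V y = U (I y) - I y * y := hVeq y hy'
      nlinarith
    have A2 : V z - V y ≤ -(I z) * (z - y) := by
      have h1 : U (I z) - I z * y ≤ V y := hVmem y hy' _ (hI_pos z hz0')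
      have h2 : V z = U (I z) - I z * z := hVeq z hz0'
      nlinarith
    have hzy' : z - y ≠ 0 := sub_ne_zero.2 hzy
    have key : |(V z - V y) + I y * (z - y)| ≤ |I y - I z| * |z - y| := by
      have hnn : 0 ≤ (V z - V y) + I y * (z - y) := by nlinarith
      have hle : (V z - V y) + I y * (z - y) ≤ (I y - I z) * (z - y) := by nlinarith
      rw [abs_of_nonneg hnn]
      calc (V z - V y) + I y * (z - y) ≤ (I y - I z) * (z - y) := hle
        _ ≤ |(I y - I z) * (z - y)| := le_abs_self _
        _ = |I y - I z| * |z - y| := abs_mul _ _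
    have hslope : dist (slope V y z) (-(I y)) = |(V z - V y) + I y * (z - y)| / |z - y| := by
      rw [Real.dist_eq, slope_def_field, ← abs_div]
      congr 1
      field_simp
      ring
    rw [hslope, Real.dist_eq]
    rw [div_le_iff₀ (abs_pos.2 hzy')]
    calc |(V z - V y) + I y * (z - y)| ≤ |I y - I z| * |z - y| := key
      _ = |I z - I y| * |z - y| := by rw [abs_sub_comm]
  have hVleU : ∀ y > (0:ℝ), V y ≤ U (I y) := by
    intro y hy
    have h := hVeq y hy
    nlinarith [hI_pos y hy]
  refine ⟨hVanti, hVconv, hVderiv,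
    continuousOn_of_forall_continuousAt (fun y hy => (hIcontAt y hy).neg), ?_, ?_⟩
  · -- the limit L at infinity / at 0+
    set g : ℝ → EReal := fun x => ((U (max x 1) : ℝ) : EReal) with hg
    have hUmono : MonotoneOn U (Set.Ioi 0) := hU_incr.monotoneOn
    have hgmono : Monotone g := by
      intro p q hpq
      have h1 : (0:ℝ) < max p 1 := lt_of_lt_of_le one_pos (le_max_right p 1)
      have h2 : (0:ℝ) < max q 1 := lt_of_lt_of_le one_pos (le_max_right q 1)
      exact EReal.coe_le_coe_iff.2
        (hUmono (Set.mem_Ioi.2 h1) (Set.mem_Ioi.2 h2) (max_le_max hpq le_rfl))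
    have hgt : Tendsto g atTop (𝓝 (⨆ x, g x)) := tendsto_atTop_iSup hgmono
    have hUL : Tendsto (fun x => (U x : EReal)) atTop (𝓝 (⨆ x, g x)) := by
      apply hgt.congr'
      filter_upwards [eventually_ge_atTop (1:ℝ)] with x hx
      simp only [hg, max_eq_left hx]
    have hkey : ∀ x > (0:ℝ), (U x : EReal) ≤ ⨆ x, g x := by
      intro x hx
      have h1 : (0:ℝ) < max x 1 := lt_of_lt_of_le one_pos (le_max_right x 1)
      calc (U x : EReal) ≤ g x := EReal.coe_le_coe_iff.2
            (hUmono (Set.mem_Ioi.2 hx) (Set.mem_Ioi.2 h1) (le_max_left x 1))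
        _ ≤ ⨆ x, g x := le_iSup g x
    refine ⟨⨆ x, g x, ?_, hUL, ?_⟩
    · obtain ⟨x0, hx0, hUx0⟩ := hU_pos
      calc (0:EReal) < (U x0 : EReal) := EReal.coe_pos.2 hUx0
        _ ≤ ⨆ x, g x := hkey x0 hx0
    · rw [tendsto_order]
      constructor
      · intro b hbL
        obtain ⟨x, hbx⟩ := lt_iSup_iff.1 hbL
        have hx1 : (0:ℝ) < max x 1 := lt_of_lt_of_le one_pos (le_max_right x 1)
        induction b using EReal.rec with
        | bot =>
          filter_upwards [self_mem_nhdsWithin] with y _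
          exact EReal.bot_lt_coe _
        | coe c =>
          have hb : c < U (max x 1) := EReal.coe_lt_coe_iff.1 hbx
          have hδ : 0 < (U (max x 1) - c) / (max x 1) := div_pos (by linarith) hx1
          filter_upwards [Ioo_mem_nhdsGT hδ] with y hy
          have hy0 : 0 < y := hy.1
          have h2 : y * max x 1 < U (max x 1) - c := (lt_div_iff₀ hx1).1 hy.2
          have h3 : c < U (max x 1) - max x 1 * y := by nlinarith
          exact lt_of_lt_of_le (EReal.coe_lt_coe_iff.2 h3)
            (EReal.coe_le_coe_iff.2 (hVmem y hy0 _ hx1))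
        | top => exact absurd hbx (by simp)
      · intro b hLb
        filter_upwards [self_mem_nhdsWithin] with y hy
        have hy0 : (0:ℝ) < y := hy
        calc (V y : EReal) ≤ (U (I y) : EReal) := EReal.coe_le_coe_iff.2 (hVleU y hy0)
          _ ≤ ⨆ x, g x := hkey _ (hI_pos y hy0)
          _ < b := hLb
  · -- the limit M at 0+ / at infinity
    set M : EReal := ⨅ x : Set.Ioi (0:ℝ), ((U x : ℝ) : EReal) with hM
    have hMle : ∀ x > (0:ℝ), M ≤ (U x : EReal) := by
      intro x hx
      rw [hM]
      exact iInf_le _ (⟨x, hx⟩ : Set.Ioi (0:ℝ))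
    have hMU1 : M ≤ (U 1 : EReal) := hMle 1 one_pos
    have hUM : Tendsto (fun x => (U x : EReal)) (𝓝[>] (0:ℝ)) (𝓝 M) := by
      rw [tendsto_order]
      constructor
      · intro b hbM
        filter_upwards [self_mem_nhdsWithin] with x hx
        exact lt_of_lt_of_le hbM (hMle x hx)
      · intro b hMb
        rw [hM] at hMb
        obtain ⟨⟨x1, hx1⟩, h1⟩ := iInf_lt_iff.1 hMb
        have hx1' : (0:ℝ) < x1 := hx1
        filter_upwards [Ioo_mem_nhdsGT hx1'] with x hx
        have h2 : U x < U x1 := hU_incr (Set.mem_Ioi.2 hx.1) (Set.mem_Ioi.2 hx1') hx.2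
        exact lt_trans (EReal.coe_lt_coe_iff.2 h2) h1
    refine ⟨M, lt_of_le_of_lt hMU1 (EReal.coe_lt_top _), hUM, ?_⟩
    have hIlt : ∀ c > (0:ℝ), ∀ y > max (U' c) 0, I y < c := by
      intro c hc y hy
      have hy0 : 0 < y := lt_of_le_of_lt (le_max_right _ _) hy
      by_contra hcon
      push_neg at hcon
      have h2 : U' (I y) ≤ U' c := by
        rcases eq_or_lt_of_le hcon with h' | h'
        · rw [← h']
        · exact le_of_lt
            (hU'anti (Set.mem_Ioi.2 hc) (Set.mem_Ioi.2 (hI_pos y hy0)) h')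
      rw [hI_left y hy0] at h2
      have : y ≤ max (U' c) 0 := le_trans h2 (le_max_left _ _)
      linarith
    have hI0' : Tendsto I atTop (𝓝 (0:ℝ)) := by
      rw [tendsto_order]
      constructor
      · intro b hb
        filter_upwards [eventually_gt_atTop (0:ℝ)] with y hy
        exact lt_trans hb (hI_pos y hy)
      · intro b hb
        filter_upwards [eventually_gt_atTop (max (U' b) 0)] with y hy
        exact hIlt b hb y hy
    have hI0 : Tendsto I atTop (𝓝[>] (0:ℝ)) := by
      apply tendsto_nhdsWithin_of_tendsto_nhds_of_eventually_within _ hI0'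
      filter_upwards [eventually_gt_atTop (0:ℝ)] with y hy
      exact hI_pos y hy
    rw [tendsto_order]
    constructor
    · intro b hbM
      induction b using EReal.rec with
      | bot =>
        filter_upwards [eventually_gt_atTop (0:ℝ)] with y _
        exact EReal.bot_lt_coe _
      | coe c =>
        have hMtop : M ≠ ⊤ := fun h => absurd (h ▸ hMU1) (by simp)
        have hMbot : M ≠ ⊥ := fun h => absurd (h ▸ hbM) (by simp)
        obtain ⟨m, hm⟩ : ∃ m : ℝ, M = (m : EReal) :=
          ⟨M.toReal, (EReal.coe_toReal hMtop hMbot).symm⟩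
        rw [hm] at hbM
        have hcm : c < m := EReal.coe_lt_coe_iff.1 hbM
        have hmlt : (m : EReal) < ((2 * m - c : ℝ) : EReal) :=
          EReal.coe_lt_coe_iff.2 (by linarith)
        have hUsmall : ∀ᶠ x in 𝓝[>] (0:ℝ), U x < 2 * m - c := by
          have := (hm ▸ hUM).eventually_lt_const hmlt
          filter_upwards [this] with x hx
          exact EReal.coe_lt_coe_iff.1 hx
        filter_upwards [hI0.eventually hUsmall, eventually_gt_atTop (0:ℝ)]
          with y h1 hy0
        have hx : 0 < I y := hI_pos y hy0
        have hxmem : I y ∈ Set.Ioi (0:ℝ) := Set.mem_Ioi.2 hx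
        have hx2mem : I y / 2 ∈ Set.Ioi (0:ℝ) := Set.mem_Ioi.2 (by linarith)
        have htan := htang (I y) hxmem (I y / 2) hx2mem (by intro h; nlinarith [h])
        have hlow : m ≤ U (I y / 2) := by
          have := hMle (I y / 2) (by linarith)
          rw [hm] at this
          exact EReal.coe_le_coe_iff.1 this
        have hVy : V y = U (I y) - I y * y := hVeq y hy0
        have hyU' : U' (I y) = y := hI_left y hy0
        have hgoal : c < V y := by nlinarith
        exact EReal.coe_lt_coe_iff.2 hgoal
      | top => exact absurd hbM (by simp [lt_of_le_of_lt hMU1 (EReal.coe_lt_top _)])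
    · intro b hMb
      induction b using EReal.rec with
      | bot => exact absurd hMb (by simp)
      | coe c =>
        rw [hM] at hMb
        obtain ⟨⟨x1, hx1⟩, h1⟩ := iInf_lt_iff.1 hMb
        have hx1' : (0:ℝ) < x1 := hx1
        have hb1 : U x1 < c := EReal.coe_lt_coe_iff.1 h1
        filter_upwards [eventually_gt_atTop (max (U' x1) 0)] with y hy
        have hy0 : 0 < y := lt_of_le_of_lt (le_max_right _ _) hy
        have hIy : I y < x1 := hIlt x1 hx1' y hy
        have h2 : U (I y) < U x1 :=
          hU_incr (Set.mem_Ioi.2 (hI_pos y hy0)) (Set.mem_Ioi.2 hx1') hIy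
        have h3 : V y ≤ U (I y) := hVleU y hy0
        exact EReal.coe_lt_coe_iff.2 (by linarith)
      | top =>
        filter_upwards [eventually_gt_atTop (0:ℝ)] with y _
        exact EReal.coe_lt_top _
end

section
/- Suppose AE(U) < 1 and fix y > 0. Then the family of random variables { ω ↦ max(−V(y·g(ω)), 0) : g : Ω → [0,∞) measurable with E[g] ≤ 1 } is uniformly integrable. -/
open Filter Set Topology MeasureTheory
open scoped ENNReal

/-- Under `AE(U) < 1` and for fixed `y > 0`, the family
`{ ω ↦ max(−V(y·g(ω)), 0) : g : Ω → [0,∞) measurable, E[g] ≤ 1 }` is uniformly integrable.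
(On `{g = 0}` the value is `max(−V(0),0) = 0` since `V(0) = U(∞) > 0`.) -/
theorem neg_part_of_V_uniformly_integrable
    {Ω : Type*} [MeasurableSpace Ω] (P : Measure Ω) [IsProbabilityMeasure P]
    (U U' V I : ℝ → ℝ)
    (hU_incr : StrictMonoOn U (Set.Ioi 0))
    (hU_conc : StrictConcaveOn ℝ (Set.Ioi 0) U)
    (hU_deriv : ∀ x ∈ Set.Ioi (0:ℝ), HasDerivAt U (U' x) x)
    (hU'_cont : ContinuousOn U' (Set.Ioi 0))
    (hInada_zero : Filter.Tendsto U' (nhdsWithin 0 (Set.Ioi 0)) Filter.atTop)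
    (hInada_inf : Filter.Tendsto U' Filter.atTop (nhds 0))
    (hU_pos : ∃ x > 0, 0 < U x)
    (hV : ∀ y > 0, IsLUB {z : ℝ | ∃ x > 0, z = U x - x * y} (V y))
    (hI_pos : ∀ y > 0, 0 < I y)
    (hI_left : ∀ y > 0, U' (I y) = y)
    (hI_right : ∀ x > 0, I (U' x) = x)
    (hAE : Filter.limsup (fun x => x * U' x / U x) Filter.atTop < 1)
    (y : ℝ) (hy : 0 < y) :
    MeasureTheory.UniformIntegrable
      (fun (g : {g : Ω → ℝ // Measurable g ∧ (∀ ω, 0 ≤ g ω) ∧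
          ∫⁻ ω, ENNReal.ofReal (g ω) ∂P ≤ 1})
        (ω : Ω) => if g.1 ω = 0 then 0 else max (-(V (y * g.1 ω))) 0)
      1 P := by
  -- `V z` is an upper bound of the dual set
  have hVub : ∀ z > 0, ∀ x > 0, U x - x * z ≤ V z := fun z hz x hx =>
    (hV z hz).1 ⟨x, hx, rfl⟩
  -- the monotone truncation of `-V`
  set W : ℝ → ℝ := fun z => if z ≤ 0 then 0 else max (-(V z)) 0 with hWdef
  have hWnonneg : ∀ z, 0 ≤ W z := by
    intro z
    by_cases h : z ≤ 0 <;> simp [hWdef, h]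
  have hVanti : ∀ z1 z2 : ℝ, 0 < z1 → z1 ≤ z2 → V z2 ≤ V z1 := by
    intro z1 z2 h1 h12
    have h2 : 0 < z2 := lt_of_lt_of_le h1 h12
    refine (hV z2 h2).2 ?_
    rintro w ⟨x, hx, rfl⟩
    calc U x - x * z2 ≤ U x - x * z1 := by nlinarith
      _ ≤ V z1 := hVub z1 h1 x hx
  have hWmono : Monotone W := by
    intro z1 z2 h
    by_cases h2 : z2 ≤ 0
    · have h1 : z1 ≤ 0 := le_trans h h2
      simp [hWdef, h1, h2]
    · push_neg at h2
      by_cases h1 : z1 ≤ 0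
      · simp only [hWdef, if_pos h1, if_neg (not_le.mpr h2)]
        exact le_max_right _ _
      · push_neg at h1
        simp only [hWdef, if_neg (not_le.mpr h1), if_neg (not_le.mpr h2)]
        exact max_le_max (neg_le_neg (hVanti z1 z2 h1 h)) le_rfl
  -- sublinear bound on W with arbitrary slope
  have hWbound : ∀ a > 0, ∀ z, 0 ≤ z → W z ≤ a * z + max (-(U a)) 0 := by
    intro a ha z hz
    by_cases h : z ≤ 0
    · have : W z = 0 := by simp [hWdef, h]
      rw [this]
      have : 0 ≤ max (-(U a)) 0 := le_max_right _ _
      nlinarith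
    · push_neg at h
      simp only [hWdef, if_neg (not_le.mpr h)]
      have hb : -(V z) ≤ a * z - U a := by
        have := hVub z h a ha; linarith
      refine max_le ?_ ?_
      · have : -(U a) ≤ max (-(U a)) 0 := le_max_left _ _
        linarith
      · have h1 : 0 ≤ a * z := by positivity
        have h2 : 0 ≤ max (-(U a)) 0 := le_max_right _ _
        linarith
  -- rewrite the family
  have hfam : (fun (g : {g : Ω → ℝ // Measurable g ∧ (∀ ω, 0 ≤ g ω) ∧
          ∫⁻ ω, ENNReal.ofReal (g ω) ∂P ≤ 1})
        (ω : Ω) => if g.1 ω = 0 then 0 else max (-(V (y * g.1 ω))) 0)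
      = fun g ω => W (y * g.1 ω) := by
    funext g ω
    rcases eq_or_lt_of_le (g.2.2.1 ω) with h | h
    · simp [hWdef, ← h]
    · have hpos : 0 < y * g.1 ω := mul_pos hy h
      simp [hWdef, not_le.mpr hpos, (ne_of_gt h)]
  rw [hfam]
  -- key integral bound
  have key : ∀ a > 0, ∀ (g : Ω → ℝ), (∀ ω, 0 ≤ g ω) →
      (∫⁻ ω, ENNReal.ofReal (g ω) ∂P ≤ 1) → ∀ s : Set Ω, MeasurableSet s →
      ∫⁻ ω in s, ENNReal.ofReal (W (y * g ω)) ∂P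
        ≤ ENNReal.ofReal (a * y) + ENNReal.ofReal (max (-(U a)) 0) * P s := by
    intro a ha g hg0 hgint s hs
    have h1 : ∀ ω, ENNReal.ofReal (W (y * g ω)) ≤
        ENNReal.ofReal (a * y) * ENNReal.ofReal (g ω) + ENNReal.ofReal (max (-(U a)) 0) := by
      intro ω
      have hz : 0 ≤ y * g ω := mul_nonneg hy.le (hg0 ω)
      calc ENNReal.ofReal (W (y * g ω))
          ≤ ENNReal.ofReal (a * (y * g ω) + max (-(U a)) 0) :=
            ENNReal.ofReal_le_ofReal (hWbound a ha _ hz)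
        _ ≤ _ := by
            rw [ENNReal.ofReal_add (by positivity) (le_max_right _ _),
              show a * (y * g ω) = (a * y) * g ω by ring,
              ENNReal.ofReal_mul (by positivity)]
    calc ∫⁻ ω in s, ENNReal.ofReal (W (y * g ω)) ∂P
        ≤ ∫⁻ ω in s, (ENNReal.ofReal (a * y) * ENNReal.ofReal (g ω)
            + ENNReal.ofReal (max (-(U a)) 0)) ∂P := lintegral_mono (fun ω => h1 ω)
      _ ≤ ∫⁻ ω, (ENNReal.ofReal (a * y) * ENNReal.ofReal (g ω)) ∂P
            + ∫⁻ ω in s, ENNReal.ofReal (max (-(U a)) 0) ∂P := by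
          rw [lintegral_add_right _ measurable_const]
          gcongr
          exact Measure.restrict_le_self
      _ ≤ ENNReal.ofReal (a * y) * 1 + ENNReal.ofReal (max (-(U a)) 0) * P s := by
          rw [lintegral_const_mul' _ _ ENNReal.ofReal_ne_top, lintegral_const,
            Measure.restrict_apply_univ]
          gcongr
      _ = ENNReal.ofReal (a * y) + ENNReal.ofReal (max (-(U a)) 0) * P s := by rw [mul_one]
  -- measurability of each member
  have hmeas : ∀ (g : {g : Ω → ℝ // Measurable g ∧ (∀ ω, 0 ≤ g ω) ∧
      ∫⁻ ω, ENNReal.ofReal (g ω) ∂P ≤ 1}), Measurable (fun ω => W (y * g.1 ω)) :=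
    fun g => hWmono.measurable.comp (g.2.1.const_mul y)
  refine ⟨fun g => (hmeas g).aestronglyMeasurable, ?_, ?_⟩
  · -- UnifIntegrable
    intro ε hε
    set a : ℝ := ε / (2 * y) with ha
    have hapos : 0 < a := by positivity
    set C : ℝ := max (-(U a)) 0 with hC
    have hC0 : 0 ≤ C := le_max_right _ _
    refine ⟨ε / (2 * (C + 1)), by positivity, ?_⟩
    intro g s hs hPs
    rw [eLpNorm_indicator_eq_eLpNorm_restrict hs, eLpNorm_one_eq_lintegral_enorm]
    calc ∫⁻ ω in s, ‖W (y * g.1 ω)‖ₑ ∂P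
        = ∫⁻ ω in s, ENNReal.ofReal (W (y * g.1 ω)) ∂P := by
          refine lintegral_congr fun ω => ?_
          exact Real.enorm_eq_ofReal (hWnonneg _)
      _ ≤ ENNReal.ofReal (a * y) + ENNReal.ofReal C * P s :=
          key a hapos g.1 g.2.2.1 g.2.2.2 s hs
      _ ≤ ENNReal.ofReal (ε / 2) + ENNReal.ofReal C * ENNReal.ofReal (ε / (2 * (C + 1))) := by
          gcongr
          refine le_of_eq ?_
          rw [ha]
          field_simp
      _ ≤ ENNReal.ofReal (ε / 2) + ENNReal.ofReal (ε / 2) := by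
          gcongr
          rw [← ENNReal.ofReal_mul hC0]
          refine ENNReal.ofReal_le_ofReal ?_
          rw [mul_comm, div_mul_eq_mul_div, div_le_div_iff₀ (by positivity) (by norm_num)]
          nlinarith
      _ = ENNReal.ofReal ε := by
          rw [← ENNReal.ofReal_add (by positivity) (by positivity)]
          norm_num
  · -- uniform L¹ norm bound
    refine ⟨(y + max (-(U 1)) 0).toNNReal, fun g => ?_⟩
    rw [eLpNorm_one_eq_lintegral_enorm]
    have h1 : ∫⁻ ω, ‖W (y * g.1 ω)‖ₑ ∂P
        = ∫⁻ ω in Set.univ, ENNReal.ofReal (W (y * g.1 ω)) ∂P := by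
      rw [setLIntegral_univ]
      exact lintegral_congr fun ω => Real.enorm_eq_ofReal (hWnonneg _)
    rw [h1]
    calc ∫⁻ ω in Set.univ, ENNReal.ofReal (W (y * g.1 ω)) ∂P
        ≤ ENNReal.ofReal (1 * y) + ENNReal.ofReal (max (-(U 1)) 0) * P Set.univ :=
          key 1 one_pos g.1 g.2.2.1 g.2.2.2 Set.univ MeasurableSet.univ
      _ = ENNReal.ofReal (y + max (-(U 1)) 0) := by
          rw [measure_univ, mul_one, one_mul,
            ENNReal.ofReal_add hy.le (le_max_right _ _)]
      _ = ((y + max (-(U 1)) 0).toNNReal : ℝ≥0∞) := rfl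
end

section
/- Suppose AE(U) < 1. Let y > 0 and let g : Ω → [0,∞) be integrable with E[|V(y·g)|] < ∞. Then there exists ε₀ ∈ (0, y) such that the family of random variables { ω ↦ g(ω)·I((y−ε)·g(ω)) : 0 < ε < ε₀ } is uniformly integrable, where g(ω)·I((y−ε)·g(ω)) is interpreted as 0 on the set {g = 0}. -/
open Filter Set Topology MeasureTheory
open scoped ENNReal

lemma upperish_measurableSet {T : Set ℝ} (hT : ∀ a ∈ T, ∀ b, a ≤ b → b ∈ T) :
    MeasurableSet T := by
  rcases T.eq_empty_or_nonempty with rfl | hne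
  · exact MeasurableSet.empty
  by_cases hbd : BddBelow T
  · have h1 : Ioi (sInf T) ⊆ T := by
      intro x hx
      obtain ⟨t, htT, htx⟩ := exists_lt_of_csInf_lt hne hx
      exact hT t htT x htx.le
    have h2 : T ⊆ Ici (sInf T) := fun x hx => csInf_le hbd hx
    have hTeq : T = Ioi (sInf T) ∪ (T ∩ {sInf T}) := by
      ext x; constructor
      · intro hx
        rcases eq_or_lt_of_le (Set.mem_Ici.mp (h2 hx)) with h | h
        · exact Or.inr ⟨hx, h.symm⟩
        · exact Or.inl h
      · rintro (hx | ⟨hx, _⟩)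
        · exact h1 hx
        · exact hx
    rw [hTeq]
    exact measurableSet_Ioi.union
      ((Set.subsingleton_singleton.anti Set.inter_subset_right).measurableSet)
  · have : T = univ := by
      apply eq_univ_of_forall
      intro x
      obtain ⟨t, htT, htx⟩ := not_bddBelow_iff.mp hbd x
      exact hT t htT x htx.le
    rw [this]; exact MeasurableSet.univ

lemma measurable_comp_antiOn {Ω : Type*} [MeasurableSpace Ω] (φ : ℝ → ℝ)
    (hφ : ∀ a b : ℝ, 0 < a → a ≤ b → φ b ≤ φ a)
    {f : Ω → ℝ} (hf : Measurable f) (h0 : ∀ ω, 0 < f ω) :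
    Measurable fun ω => φ (f ω) := by
  apply measurable_of_Iio
  intro c
  have heq : (fun ω => φ (f ω)) ⁻¹' Iio c = f ⁻¹' {x | 0 < x ∧ φ x < c} := by
    ext ω; simp [h0 ω]
  rw [heq]
  exact hf (upperish_measurableSet
    (fun a ha b hab => ⟨lt_of_lt_of_le ha.1 hab, lt_of_le_of_lt (hφ a b ha.1 hab) ha.2⟩))

lemma tangent_aux (U U' : ℝ → ℝ) (hU_conc : StrictConcaveOn ℝ (Set.Ioi 0) U)
    (hU_deriv : ∀ x ∈ Set.Ioi (0:ℝ), HasDerivAt U (U' x) x) :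
    ∀ a ∈ Set.Ioi (0:ℝ), ∀ x ∈ Set.Ioi (0:ℝ), U x ≤ U a + U' a * (x - a) := by
  intro a ha x hx
  have hconc := hU_conc.concaveOn
  rcases lt_trichotomy x a with h | h | h
  · have hs := hconc.le_slope_of_hasDerivAt hx ha h (hU_deriv a ha)
    rw [slope_def_field] at hs
    have hax : 0 < a - x := by linarith
    rw [le_div_iff₀ hax] at hs
    nlinarith
  · subst h; simp
  · have hs := hconc.slope_le_of_hasDerivAt ha hx h (hU_deriv a ha)
    rw [slope_def_field] at hs
    have hax : 0 < x - a := by linarith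
    rw [div_le_iff₀ hax] at hs
    nlinarith

set_option maxHeartbeats 2000000 in
/-- Under `AE(U) < 1`, for `y > 0` and `g : Ω → [0,∞)` integrable with
`E[|V(y·g)|] < ∞` (where `V(0) := U(∞) =: V0`, possibly `+∞`, on `{g = 0}`), there is
`ε₀ ∈ (0, y)` such that `{ ω ↦ g(ω)·I((y−ε)·g(ω)) : 0 < ε < ε₀ }` is uniformly integrable,
the integrand being interpreted as `0` on `{g = 0}`. -/
theorem gI_family_uniformly_integrable
    {Ω : Type*} [MeasurableSpace Ω] (P : Measure Ω) [IsProbabilityMeasure P]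
    (U U' V I : ℝ → ℝ)
    (hU_incr : StrictMonoOn U (Set.Ioi 0))
    (hU_conc : StrictConcaveOn ℝ (Set.Ioi 0) U)
    (hU_deriv : ∀ x ∈ Set.Ioi (0:ℝ), HasDerivAt U (U' x) x)
    (hU'_cont : ContinuousOn U' (Set.Ioi 0))
    (hInada_zero : Filter.Tendsto U' (nhdsWithin 0 (Set.Ioi 0)) Filter.atTop)
    (hInada_inf : Filter.Tendsto U' Filter.atTop (nhds 0))
    (hU_pos : ∃ x > 0, 0 < U x)
    (hV : ∀ y > 0, IsLUB {z : ℝ | ∃ x > 0, z = U x - x * y} (V y))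
    (hI_pos : ∀ y > 0, 0 < I y)
    (hI_left : ∀ y > 0, U' (I y) = y)
    (hI_right : ∀ x > 0, I (U' x) = x)
    (hAE : Filter.limsup (fun x => x * U' x / U x) Filter.atTop < 1)
    (V0 : EReal) (hV0 : Filter.Tendsto (fun x => (U x : EReal)) Filter.atTop (nhds V0))
    (y : ℝ) (hy : 0 < y)
    (g : Ω → ℝ) (hg_meas : Measurable g) (hg_nonneg : ∀ ω, 0 ≤ g ω)
    (hg_int : Integrable g P)
    (hVg : ∫⁻ ω, (if g ω = 0 then V0 else (V (y * g ω) : EReal)).abs ∂P ≠ ⊤) :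
    ∃ ε₀ : ℝ, 0 < ε₀ ∧ ε₀ < y ∧
      MeasureTheory.UniformIntegrable
        (fun (ε : {e : ℝ // 0 < e ∧ e < ε₀}) (ω : Ω) =>
          if g ω = 0 then 0 else g ω * I ((y - ε.1) * g ω))
        1 P := by
  have tangent := tangent_aux U U' hU_conc hU_deriv
  -- U' is positive on (0,∞)
  have hU'pos : ∀ x : ℝ, 0 < x → 0 < U' x := by
    intro x hx
    have h1 := tangent x hx (x + 1) (by simp; linarith)
    have h2 : U x < U (x + 1) := hU_incr hx (by simp; linarith) (by linarith)
    nlinarith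
  -- U' is antitone on (0,∞)
  have hU'anti : ∀ a b : ℝ, 0 < a → a ≤ b → U' b ≤ U' a := by
    intro a b ha hab
    rcases eq_or_lt_of_le hab with rfl | h
    · exact le_rfl
    have hb : (0:ℝ) < b := lt_of_lt_of_le ha hab
    have h1 := tangent a ha b hb
    have h2 := tangent b hb a ha
    nlinarith
  -- V facts
  have hVmem : ∀ t : ℝ, 0 < t → ∀ x : ℝ, 0 < x → U x - x * t ≤ V t := by
    intro t ht x hx
    exact (hV t ht).1 ⟨x, hx, rfl⟩
  have hVeq : ∀ t : ℝ, 0 < t → V t = U (I t) - t * I t := by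
    intro t ht
    have hIt := hI_pos t ht
    refine le_antisymm ?_ ?_
    · apply (hV t ht).2
      rintro z ⟨x, hx, rfl⟩
      have h1 := tangent (I t) hIt x hx
      rw [hI_left t ht] at h1
      nlinarith
    · have := hVmem t ht (I t) hIt
      linarith [this, mul_comm (I t) t]
  have hVanti : ∀ a b : ℝ, 0 < a → a ≤ b → V b ≤ V a := by
    intro a b ha hab
    have hb : (0:ℝ) < b := lt_of_lt_of_le ha hab
    have hIb := hI_pos b hb
    have h1 := hVmem a ha (I b) hIb
    rw [hVeq b hb]
    nlinarith
  -- eventual bound from limsup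
  obtain ⟨x₁, hx₁pos, hx₁U⟩ := hU_pos
  have hUposge : ∀ x : ℝ, x₁ ≤ x → 0 < U x := by
    intro x hx
    rcases eq_or_lt_of_le hx with rfl | h
    · exact hx₁U
    · exact lt_trans hx₁U (hU_incr hx₁pos (lt_trans hx₁pos h) h)
  have hbdd : ∀ᶠ x in atTop, x * U' x / U x ≤ 2 := by
    filter_upwards [eventually_ge_atTop (max (2 * x₁) 1)] with x hx
    have hx1 : (1:ℝ) ≤ x := le_trans (le_max_right _ _) hx
    have hx2 : 2 * x₁ ≤ x := le_trans (le_max_left _ _) hx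
    have hxpos : (0:ℝ) < x := by linarith
    have hhalfpos : (0:ℝ) < x / 2 := by linarith
    have hx₁half : x₁ ≤ x / 2 := by linarith
    have hUhalf : 0 < U (x / 2) := hUposge _ hx₁half
    have hUx : 0 < U x := hUposge _ (by linarith)
    have ht := tangent x hxpos (x / 2) hhalfpos
    rw [div_le_iff₀ hUx]
    nlinarith
  have hb : Filter.IsBoundedUnder (· ≤ ·) atTop (fun x => x * U' x / U x) :=
    ⟨2, by simpa [eventually_map] using hbdd⟩
  set L := Filter.limsup (fun x => x * U' x / U x) Filter.atTop with hL
  set γ : ℝ := max (1/2) ((L + 1) / 2) with hγ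
  have hγ1 : γ < 1 := max_lt (by norm_num) (by linarith)
  have hγhalf : (1/2 : ℝ) ≤ γ := le_max_left _ _
  have hγ0 : (0:ℝ) < γ := by linarith
  have hLγ : L < γ := lt_of_lt_of_le (by linarith) (le_max_right _ _)
  have hev := Filter.eventually_lt_of_limsup_lt hLγ hb
  obtain ⟨x₀', hx₀'⟩ := eventually_atTop.mp hev
  set x₀ : ℝ := max x₀' (max x₁ 1) with hx₀def
  have hx₀pos : (0:ℝ) < x₀ := lt_of_lt_of_le one_pos (le_trans (le_max_right _ _) (le_max_right _ _))
  have hx₀spec : ∀ x : ℝ, x₀ ≤ x → 0 < U x ∧ x * U' x ≤ γ * U x := by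
    intro x hx
    have hUx : 0 < U x :=
      hUposge x (le_trans (le_trans (le_max_left _ _) (le_max_right x₀' _)) hx)
    have hq := hx₀' x (le_trans (le_max_left _ _) hx)
    rw [div_lt_iff₀ hUx] at hq
    exact ⟨hUx, hq.le⟩
  set y₁ : ℝ := U' x₀ with hy₁def
  have hy₁pos : 0 < y₁ := hU'pos x₀ hx₀pos
  -- key inequality: (1-γ) t I(t) ≤ γ V(t) for 0 < t ≤ y₁
  have key : ∀ t : ℝ, 0 < t → t ≤ y₁ → (1 - γ) * (t * I t) ≤ γ * V t := by
    intro t ht hty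
    have hIt := hI_pos t ht
    have hge : x₀ ≤ I t := by
      by_contra hcon
      push_neg at hcon
      have h1 : U' x₀ ≤ U' (I t) := hU'anti (I t) x₀ hIt hcon.le
      rw [hI_left t ht] at h1
      have ht1 : t = U' x₀ := le_antisymm hty h1
      have : I t = x₀ := by rw [ht1, hI_right x₀ hx₀pos]
      exact absurd this (ne_of_lt hcon)
    obtain ⟨hUIt, hspec⟩ := hx₀spec (I t) hge
    rw [hI_left t ht] at hspec
    have hUeq : U (I t) = V t + t * I t := by rw [hVeq t ht]; ring
    nlinarith
  have hVpos : ∀ t : ℝ, 0 < t → t ≤ y₁ → 0 < V t := by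
    intro t ht hty
    have hk := key t ht hty
    have : 0 < t * I t := mul_pos ht (hI_pos t ht)
    nlinarith
  -- doubling: V(l t) ≤ 2 V(t) for 0 < t ≤ y₁, l := 2γ/(1+γ)
  set l : ℝ := 2 * γ / (1 + γ) with hldef
  have h1γ : (0:ℝ) < 1 + γ := by linarith
  have hl0 : 0 < l := by positivity
  have hl1 : l < 1 := by rw [div_lt_one h1γ]; linarith
  have dbl : ∀ t : ℝ, 0 < t → t ≤ y₁ → V (l * t) ≤ 2 * V t := by
    intro t ht hty
    have hltpos : 0 < l * t := mul_pos hl0 ht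
    have hltle : l * t ≤ y₁ := le_trans (by nlinarith) hty
    have hIlt := hI_pos _ hltpos
    have hB := key (l * t) hltpos hltle
    have hA : U (I (l * t)) - I (l * t) * t ≤ V t := hVmem t ht _ hIlt
    have hUeq : U (I (l * t)) = V (l * t) + (l * t) * I (l * t) := by
      rw [hVeq _ hltpos]; ring
    have hVlt := hVpos _ hltpos hltle
    have hItpos : 0 < t * I (l * t) := mul_pos ht hIlt
    have h2 : (1 - γ) * (2 * γ / (1 + γ)) * (t * I (l * t)) ≤ γ * V (l * t) := by
      calc (1 - γ) * (2 * γ / (1 + γ)) * (t * I (l * t))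
          = (1 - γ) * ((l * t) * I (l * t)) := by rw [hldef]; ring
        _ ≤ γ * V (l * t) := hB
    have e : (1 - γ) * (2 * γ / (1 + γ)) = 2 * γ * (1 - l) := by
      rw [hldef]; field_simp; ring
    rw [e] at h2
    have h2'' : γ * (2 * ((1 - l) * (t * I (l * t)))) ≤ γ * V (l * t) := by linarith
    have h4 : 2 * ((1 - l) * (t * I (l * t))) ≤ V (l * t) :=
      le_of_mul_le_mul_left h2'' hγ0
    have hA' : V (l * t) - (1 - l) * (t * I (l * t)) ≤ V t := by linarith [hA, hUeq]
    linarith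
  -- iterate the doubling
  have hiter : ∀ m : ℕ, ∀ t : ℝ, 0 < t → t ≤ y₁ → V (l ^ m * t) ≤ 2 ^ m * V t := by
    intro m
    induction m with
    | zero => intro t ht hty; simp
    | succ k ih =>
      intro t ht hty
      have hlkpos : (0:ℝ) < l ^ k * t := mul_pos (pow_pos hl0 k) ht
      have hlk1 : l ^ k ≤ 1 := pow_le_one₀ hl0.le hl1.le
      have hlkle : l ^ k * t ≤ y₁ :=
        le_trans (by nlinarith : l ^ k * t ≤ t) hty
      have hstep := dbl (l ^ k * t) hlkpos hlkle
      have hrw : l ^ (k + 1) * t = l * (l ^ k * t) := by ring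
      rw [hrw, pow_succ]
      have := ih t ht hty
      nlinarith
  obtain ⟨n, hn⟩ := exists_pow_lt_of_lt_one (by norm_num : (0:ℝ) < 1/4) hl1
  set C : ℝ := 2 ^ n with hCdef
  have hCpos : (0:ℝ) < C := by positivity
  have quarter : ∀ t : ℝ, 0 < t → t ≤ y₁ → V (t / 4) ≤ C * V t := by
    intro t ht hty
    have hlnpos : (0:ℝ) < l ^ n * t := mul_pos (pow_pos hl0 n) ht
    have hle : l ^ n * t ≤ t / 4 := by nlinarith
    exact le_trans (hVanti _ _ hlnpos hle) (hiter n t ht hty)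
  set M : ℝ := max (V (y₁ / 4)) 0 with hMdef
  have hM0 : 0 ≤ M := le_max_right _ _
  -- quarter bound for all z > 0
  have Vq : ∀ z : ℝ, 0 < z → V (z / 4) ≤ C * |V z| + M := by
    intro z hz
    rcases le_or_gt z y₁ with h | h
    · have h1 := quarter z hz h
      have h2 := hVpos z hz h
      rw [abs_of_pos h2]
      linarith
    · have h1 : V (z / 4) ≤ V (y₁ / 4) := hVanti _ _ (by positivity) (by linarith)
      have h2 : V (y₁ / 4) ≤ M := le_max_left _ _
      have h3 : 0 ≤ C * |V z| := by positivity
      linarith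
  -- the dominating function
  set W : Ω → ℝ := fun ω => if g ω = 0 then 0 else |V (y * g ω)| with hWdef
  have hWnonneg : ∀ ω, 0 ≤ W ω := by
    intro ω; rw [hWdef]; dsimp only
    split
    · exact le_rfl
    · exact abs_nonneg _
  set hfun : Ω → ℝ := fun ω => (4 / y) * ((C + 1) * W ω + M) with hhdef
  have hfun_nonneg : ∀ ω, 0 ≤ hfun ω := by
    intro ω; rw [hhdef]; dsimp only
    have := hWnonneg ω
    positivity
  refine ⟨y / 2, half_pos hy, by linarith, ?_⟩
  -- pointwise domination
  have dom : ∀ (ε : {e : ℝ // 0 < e ∧ e < y / 2}) (ω : Ω),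
      |(if g ω = 0 then 0 else g ω * I ((y - ε.1) * g ω))| ≤ hfun ω := by
    rintro ⟨ε, hε1, hε2⟩ ω
    by_cases hg0 : g ω = 0
    · rw [if_pos hg0]; simpa using hfun_nonneg ω
    · rw [if_neg hg0]
      have hgpos : 0 < g ω := lt_of_le_of_ne (hg_nonneg ω) (Ne.symm hg0)
      have hyε : 0 < y - ε := by linarith
      set t : ℝ := (y - ε) * g ω with htdef
      set z : ℝ := y * g ω with hzdef
      have htpos : 0 < t := mul_pos hyε hgpos
      have hzpos : 0 < z := mul_pos hy hgpos
      have htz : t ≤ z := by rw [htdef, hzdef]; nlinarith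
      have hIt := hI_pos t htpos
      have hfnonneg : 0 ≤ g ω * I t := le_of_lt (mul_pos hgpos hIt)
      rw [abs_of_nonneg hfnonneg]
      -- step 1 : t * I t ≤ 2 * (V (t/2) - V t)
      have h1 : U (I t) - I t * (t / 2) ≤ V (t / 2) := hVmem (t / 2) (by linarith) (I t) hIt
      have hUeq : U (I t) = V t + t * I t := by rw [hVeq t htpos]; ring
      have step1 : t * I t ≤ 2 * (V (t / 2) - V t) := by nlinarith
      have step2 : V (t / 2) ≤ V (z / 4) := by
        apply hVanti _ _ (by linarith)
        rw [htdef, hzdef]; nlinarith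
      have step3 : V z ≤ V t := hVanti t z htpos htz
      have step4 : V (z / 4) ≤ C * |V z| + M := Vq z hzpos
      have habs : -V z ≤ |V z| := neg_le_abs _
      have hWω : W ω = |V z| := by rw [hWdef]; simp [hg0, hzdef]
      have A1 : t * I t ≤ 2 * ((C + 1) * |V z| + M) := by linarith
      have A2 : y * (g ω * I t) ≤ 2 * (t * I t) := by
        have h2ε : 0 < y - 2 * ε := by linarith
        have hgI : 0 < g ω * I t := mul_pos hgpos hIt
        have : t * I t = (y - ε) * (g ω * I t) := by rw [htdef]; ring
        nlinarith
      rw [hhdef]; dsimp only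
      rw [hWω]
      rw [div_mul_eq_mul_div, le_div_iff₀ hy]
      nlinarith [A1, A2, abs_nonneg (V z), hM0]
  -- measurability
  have hset : MeasurableSet {ω | g ω = 0} := hg_meas (measurableSet_singleton 0)
  set g' : Ω → ℝ := fun ω => if g ω = 0 then 1 else g ω with hg'def
  have hg'meas : Measurable g' := Measurable.ite hset measurable_const hg_meas
  have hg'pos : ∀ ω, 0 < g' ω := by
    intro ω; rw [hg'def]; dsimp only
    split
    · exact one_pos
    · exact lt_of_le_of_ne (hg_nonneg ω) (Ne.symm (by assumption))
  have hIanti : ∀ t s : ℝ, 0 < t → t ≤ s → I s ≤ I t := by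
    intro t s ht hts
    have hs : 0 < s := lt_of_lt_of_le ht hts
    by_contra hcon
    push_neg at hcon
    have h1 : U' (I s) ≤ U' (I t) := hU'anti (I t) (I s) (hI_pos t ht) hcon.le
    rw [hI_left t ht, hI_left s hs] at h1
    have : t = s := le_antisymm hts h1
    subst this
    exact lt_irrefl _ hcon
  have hfmeas : ∀ ε : {e : ℝ // 0 < e ∧ e < y / 2},
      Measurable (fun ω => if g ω = 0 then (0:ℝ) else g ω * I ((y - ε.1) * g ω)) := by
    rintro ⟨ε, hε1, hε2⟩
    have hyε : (0:ℝ) < y - ε := by linarith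
    have hIcomp : Measurable fun ω => I ((y - ε) * g' ω) :=
      measurable_comp_antiOn (fun s => I ((y - ε) * s))
        (fun a b ha hab => hIanti _ _ (mul_pos hyε ha)
          (mul_le_mul_of_nonneg_left hab hyε.le)) hg'meas hg'pos
    have heq : (fun ω => if g ω = 0 then (0:ℝ) else g ω * I ((y - ε) * g ω))
        = fun ω => if g ω = 0 then (0:ℝ) else g ω * I ((y - ε) * g' ω) := by
      funext ω
      by_cases h : g ω = 0 <;> simp [h, hg'def]
    dsimp only
    rw [heq]
    exact Measurable.ite hset measurable_const (hg_meas.mul hIcomp)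
  have hWmeas : Measurable W := by
    have hVcomp : Measurable fun ω => |V (y * g' ω)| :=
      (measurable_comp_antiOn (fun s => V (y * s))
        (fun a b ha hab => hVanti _ _ (mul_pos hy ha)
          (mul_le_mul_of_nonneg_left hab hy.le)) hg'meas hg'pos).abs
    have heq : W = fun ω => if g ω = 0 then (0:ℝ) else |V (y * g' ω)| := by
      funext ω
      by_cases h : g ω = 0 <;> simp [hWdef, h, hg'def]
    rw [heq]
    exact Measurable.ite hset measurable_const hVcomp
  -- integrability of the dominating function
  have hWint : Integrable W P := by
    refine ⟨hWmeas.aestronglyMeasurable, ?_⟩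
    have hpt : ∀ ω, (‖W ω‖₊ : ℝ≥0∞) ≤ (if g ω = 0 then V0 else (V (y * g ω) : EReal)).abs := by
      intro ω
      by_cases h : g ω = 0
      · simp [hWdef, h]
      · rw [if_neg h]
        have : W ω = |V (y * g ω)| := by rw [hWdef]; simp [h]
        rw [this, EReal.abs_def]
        rw [← Real.enorm_eq_ofReal_abs]
        simp
    exact lt_of_le_of_lt (lintegral_mono hpt) (lt_top_iff_ne_top.2 hVg)
  have hInt : Integrable hfun P := by
    have h1 : Integrable (fun ω => (C + 1) * W ω + M) P :=
      (hWint.const_mul _).add (integrable_const M)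
    exact h1.const_mul _
  have hmem : MemLp hfun 1 P := memLp_one_iff_integrable.mpr hInt
  refine ⟨fun i => (hfmeas i).aestronglyMeasurable, ?_, ?_⟩
  · -- UnifIntegrable
    intro ε hε
    obtain ⟨δ, hδpos, hδ⟩ := hmem.eLpNorm_indicator_le le_rfl ENNReal.one_ne_top hε
    refine ⟨δ, hδpos, fun i s hs hμs => ?_⟩
    calc eLpNorm (s.indicator (fun ω => if g ω = 0 then 0 else g ω * I ((y - i.1) * g ω))) 1 P
        ≤ eLpNorm (s.indicator hfun) 1 P := by
          apply eLpNorm_mono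
          intro x
          by_cases hx : x ∈ s
          · rw [Set.indicator_of_mem hx, Set.indicator_of_mem hx, Real.norm_eq_abs,
              Real.norm_eq_abs]
            exact (dom i x).trans (le_abs_self _)
          · simp [Set.indicator_of_notMem hx]
      _ ≤ ENNReal.ofReal ε := hδ s hs hμs
  · -- uniform bound
    refine ⟨(eLpNorm hfun 1 P).toNNReal, fun i => ?_⟩
    have hlt : eLpNorm hfun 1 P < ⊤ := hmem.2
    calc eLpNorm (fun ω => if g ω = 0 then 0 else g ω * I ((y - i.1) * g ω)) 1 P
        ≤ eLpNorm hfun 1 P := by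
          apply eLpNorm_mono
          intro x
          rw [Real.norm_eq_abs, Real.norm_eq_abs]
          exact (dom i x).trans (le_abs_self _)
      _ = ((eLpNorm hfun 1 P).toNNReal : ℝ≥0∞) := (ENNReal.coe_toNNReal hlt.ne).symm
end

section
/- Suppose AE(U) < 1. Let g : Ω → [0,∞) be integrable with E[|V(z·g)|] < ∞ for every z > 0. Then for every y > 0 the function φ(z) := E[V(z·g)] is differentiable at y, with finite derivative φ'(y) = −E[g·I(y·g)], where g·I(y·g) is interpreted as 0 on the set {g = 0}. -/
open Filter Set Topology MeasureTheory
open scoped ENNReal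

/-- A function continuous on `Ioi 0` admits a globally measurable extension. -/
lemma measurable_extension_of_continuousOn_Ioi (f : ℝ → ℝ)
    (hf : ContinuousOn f (Set.Ioi 0)) :
    ∃ W : ℝ → ℝ, Measurable W ∧ ∀ t : ℝ, 0 < t → W t = f t := by
  refine ⟨Function.extend Subtype.val ((Set.Ioi (0:ℝ)).restrict f) (fun _ => 0), ?_, ?_⟩
  · exact (MeasurableEmbedding.subtype_coe measurableSet_Ioi).measurable_extend
      (continuousOn_iff_continuous_restrict.mp hf).measurable measurable_const
  · intro t ht
    have := Subtype.val_injective.extend_apply ((Set.Ioi (0:ℝ)).restrict f)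
      (fun _ => 0) (⟨t, ht⟩ : Set.Ioi (0:ℝ))
    exact this

lemma ereal_nnnorm_toReal_le (x : EReal) : (‖x.toReal‖₊ : ℝ≥0∞) ≤ x.abs := by
  induction x using EReal.rec with
  | bot => simp
  | coe r =>
      rw [EReal.toReal_coe, EReal.abs_def, ← enorm_eq_nnnorm, Real.enorm_eq_ofReal_abs]
  | top => simp

/-- Under `AE(U) < 1`, if `g : Ω → [0,∞)` is integrable with `E[|V(z·g)|] < ∞`
for every `z > 0` (with `V(0) := U(∞) =: V0` on `{g = 0}`), then for every `y > 0` the map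
`φ(z) := E[V(z·g)]` is differentiable at `y` with finite derivative
`φ'(y) = −E[g·I(y·g)]`, where `g·I(y·g)` is interpreted as `0` on `{g = 0}`. -/
theorem dual_expectation_differentiable
    {Ω : Type*} [MeasurableSpace Ω] (P : Measure Ω) [IsProbabilityMeasure P]
    (U U' V I : ℝ → ℝ)
    (hU_incr : StrictMonoOn U (Set.Ioi 0))
    (hU_conc : StrictConcaveOn ℝ (Set.Ioi 0) U)
    (hU_deriv : ∀ x ∈ Set.Ioi (0:ℝ), HasDerivAt U (U' x) x)
    (hU'_cont : ContinuousOn U' (Set.Ioi 0))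
    (hInada_zero : Filter.Tendsto U' (nhdsWithin 0 (Set.Ioi 0)) Filter.atTop)
    (hInada_inf : Filter.Tendsto U' Filter.atTop (nhds 0))
    (hU_pos : ∃ x > 0, 0 < U x)
    (hV : ∀ y > 0, IsLUB {z : ℝ | ∃ x > 0, z = U x - x * y} (V y))
    (hI_pos : ∀ y > 0, 0 < I y)
    (hI_left : ∀ y > 0, U' (I y) = y)
    (hI_right : ∀ x > 0, I (U' x) = x)
    (hAE : Filter.limsup (fun x => x * U' x / U x) Filter.atTop < 1)
    (V0 : EReal) (hV0 : Filter.Tendsto (fun x => (U x : EReal)) Filter.atTop (nhds V0))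
    (g : Ω → ℝ) (hg_meas : Measurable g) (hg_nonneg : ∀ ω, 0 ≤ g ω)
    (hg_int : Integrable g P)
    (hVg : ∀ z : ℝ, 0 < z →
      ∫⁻ ω, (if g ω = 0 then V0 else (V (z * g ω) : EReal)).abs ∂P ≠ ⊤) :
    ∀ y : ℝ, 0 < y →
      Integrable (fun ω => if g ω = 0 then 0 else g ω * I (y * g ω)) P ∧
      HasDerivAt
        (fun z => ∫ ω, (if g ω = 0 then V0 else (V (z * g ω) : EReal)).toReal ∂P)
        (-(∫ ω, (if g ω = 0 then 0 else g ω * I (y * g ω)) ∂P)) y := by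
  -- U' is strictly antitone on (0, ∞)
  have hdiffU : ∀ x ∈ Set.Ioi (0:ℝ), DifferentiableAt ℝ U x :=
    fun x hx => (hU_deriv x hx).differentiableAt
  have hU'_anti : StrictAntiOn U' (Set.Ioi 0) := by
    intro a ha b hb hab
    have h := hU_conc.strictAntiOn_deriv hdiffU ha hb hab
    rwa [(hU_deriv a ha).deriv, (hU_deriv b hb).deriv] at h
  -- U' is positive on (0, ∞)
  have hU'_pos : ∀ x : ℝ, 0 < x → 0 < U' x := by
    intro x hx
    by_contra h
    push_neg at h
    have hx1 : (x + 1 : ℝ) ∈ Set.Ioi (0:ℝ) := by simp; linarith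
    have h1 : U' (x + 1) < 0 :=
      lt_of_lt_of_le (hU'_anti (Set.mem_Ioi.2 hx) hx1 (by linarith)) h
    have hev : ∀ᶠ t in atTop, U' t ≤ U' (x + 1) := by
      filter_upwards [eventually_gt_atTop (x + 1)] with t ht
      exact (hU'_anti hx1 (Set.mem_Ioi.2 (by linarith)) ht).le
    have := le_of_tendsto hInada_inf hev
    linarith
  -- tangent line inequality for concave U
  have htan : ∀ x : ℝ, 0 < x → ∀ s : ℝ, 0 < s → U s ≤ U x + U' x * (s - x) := by
    intro x hx s hs
    rcases lt_trichotomy s x with h | h | h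
    · have h2 := hU_conc.concaveOn.le_slope_of_hasDerivAt (Set.mem_Ioi.2 hs)
        (Set.mem_Ioi.2 hx) h (hU_deriv x (Set.mem_Ioi.2 hx))
      rw [slope_def_field] at h2
      have hxs : (0:ℝ) < x - s := by linarith
      rw [le_div_iff₀ hxs] at h2
      nlinarith
    · subst h; simp
    · have h2 := hU_conc.concaveOn.slope_le_of_hasDerivAt (Set.mem_Ioi.2 hx)
        (Set.mem_Ioi.2 hs) h (hU_deriv x (Set.mem_Ioi.2 hx))
      rw [slope_def_field] at h2
      have hsx : (0:ℝ) < s - x := by linarith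
      rw [div_le_iff₀ hsx] at h2
      nlinarith
  -- formula for V
  have hVform : ∀ y : ℝ, 0 < y → V y = U (I y) - I y * y := by
    intro y hy
    have hIy := hI_pos y hy
    have hub : ∀ z ∈ {z : ℝ | ∃ x > 0, z = U x - x * y}, z ≤ U (I y) - I y * y := by
      rintro z ⟨x, hx, rfl⟩
      have h1 := htan (I y) hIy x hx
      rw [hI_left y hy] at h1
      nlinarith
    have hmem : U (I y) - I y * y ∈ {z : ℝ | ∃ x > 0, z = U x - x * y} :=
      ⟨I y, hIy, rfl⟩
    exact le_antisymm ((hV y hy).2 hub) ((hV y hy).1 hmem)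
  -- the key subgradient inequality for V
  have hkey : ∀ p : ℝ, 0 < p → ∀ q : ℝ, 0 < q → V p - I p * (q - p) ≤ V q := by
    intro p hp q hq
    have hm : U (I p) - I p * q ≤ V q := (hV q hq).1 ⟨I p, hI_pos p hp, rfl⟩
    have hf := hVform p hp
    nlinarith [hm, hf]
  -- I is antitone
  have hI_anti : ∀ p : ℝ, 0 < p → ∀ q : ℝ, 0 < q → p ≤ q → I q ≤ I p := by
    intro p hp q hq hpq
    by_contra h
    push_neg at h
    have h2 := hU'_anti (Set.mem_Ioi.2 (hI_pos p hp)) (Set.mem_Ioi.2 (hI_pos q hq)) h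
    rw [hI_left p hp, hI_left q hq] at h2
    linarith
  -- I is continuous on (0, ∞)
  have hI_cont : ∀ t : ℝ, 0 < t → ContinuousAt I t := by
    intro t ht
    have hxt : 0 < I t := hI_pos t ht
    rw [ContinuousAt, Metric.tendsto_nhds]
    intro ε hε
    set ε' : ℝ := min (ε / 2) (I t / 2) with hε'def
    have hε' : 0 < ε' := lt_min (by linarith) (by linarith)
    have hε'ε : ε' < ε := lt_of_le_of_lt (min_le_left _ _) (by linarith)
    have hlb : 0 < I t - ε' := by
      have := min_le_right (ε / 2) (I t / 2)
      simp only [← hε'def] at this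
      linarith
    have hub0 : 0 < I t + ε' := by linarith
    have hu : U' (I t + ε') < t := by
      have := hU'_anti (Set.mem_Ioi.2 hxt) (Set.mem_Ioi.2 hub0) (by linarith)
      rwa [hI_left t ht] at this
    have hv : t < U' (I t - ε') := by
      have := hU'_anti (Set.mem_Ioi.2 hlb) (Set.mem_Ioi.2 hxt) (by linarith)
      rwa [hI_left t ht] at this
    filter_upwards [Ioo_mem_nhds hu hv] with y' hy'
    have hy'pos : 0 < y' := lt_trans (hU'_pos _ hub0) hy'.1
    have h1 : I t - ε' < I y' := by
      by_contra h
      push_neg at h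
      have : U' (I t - ε') ≤ U' (I y') :=
        (hU'_anti.antitoneOn (Set.mem_Ioi.2 (hI_pos y' hy'pos)) (Set.mem_Ioi.2 hlb) h)
      rw [hI_left y' hy'pos] at this
      exact absurd hy'.2 (not_lt.2 this)
    have h2 : I y' < I t + ε' := by
      by_contra h
      push_neg at h
      have : U' (I y') ≤ U' (I t + ε') :=
        hU'_anti.antitoneOn (Set.mem_Ioi.2 hub0)
          (Set.mem_Ioi.2 (hI_pos y' hy'pos)) h
      rw [hI_left y' hy'pos] at this
      exact absurd hy'.1 (not_lt.2 this)
    rw [Real.dist_eq, abs_lt]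
    constructor <;> [linarith; linarith]
  -- V is differentiable with derivative -I
  have hV_deriv : ∀ t : ℝ, 0 < t → HasDerivAt V (-(I t)) t := by
    intro t ht
    rw [hasDerivAt_iff_isLittleO, Asymptotics.isLittleO_iff]
    intro c hc
    have hev1 : ∀ᶠ s in 𝓝 t, dist (I s) (I t) < c :=
      Metric.tendsto_nhds.mp (hI_cont t ht) c hc
    have hev2 : ∀ᶠ s in 𝓝 t, 0 < s := eventually_gt_nhds ht
    filter_upwards [hev1, hev2] with s hs1 hs2
    have h1 := hkey t ht s hs2
    have h2 := hkey s hs2 t ht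
    have hE1 : 0 ≤ V s - V t - (s - t) * (-(I t)) := by nlinarith
    have hE2 : V s - V t - (s - t) * (-(I t)) ≤ (I t - I s) * (s - t) := by nlinarith
    rw [Real.dist_eq] at hs1
    simp only [smul_eq_mul, Real.norm_eq_abs]
    rw [abs_of_nonneg hE1]
    calc V s - V t - (s - t) * (-(I t)) ≤ (I t - I s) * (s - t) := hE2
      _ ≤ |(I t - I s) * (s - t)| := le_abs_self _
      _ = |I s - I t| * |s - t| := by rw [abs_mul, abs_sub_comm]
      _ ≤ c * |s - t| := mul_le_mul_of_nonneg_right hs1.le (abs_nonneg _)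
  -- measurable extensions of V and I
  obtain ⟨W, hW_meas, hW_eq⟩ := measurable_extension_of_continuousOn_Ioi V
    (fun t ht => ((hV_deriv t ht).differentiableAt.continuousAt).continuousWithinAt)
  obtain ⟨J, hJ_meas, hJ_eq⟩ := measurable_extension_of_continuousOn_Ioi I
    (fun t ht => (hI_cont t ht).continuousWithinAt)
  have hgpos : ∀ ω, g ω ≠ 0 → 0 < g ω :=
    fun ω h => lt_of_le_of_ne (hg_nonneg ω) (Ne.symm h)
  have hset : MeasurableSet {ω | g ω = 0} := by
    have : {ω | g ω = 0} = g ⁻¹' {0} := by ext ω; simp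
    rw [this]; exact hg_meas (measurableSet_singleton 0)
  -- measurability of the integrand
  have hF_meas1 : ∀ z : ℝ, 0 < z → AEStronglyMeasurable
      (fun ω => (if g ω = 0 then V0 else ((V (z * g ω) : ℝ) : EReal)).toReal) P := by
    intro z hz
    have heq : (fun ω => (if g ω = 0 then V0 else ((V (z * g ω) : ℝ) : EReal)).toReal)
        = fun ω => if g ω = 0 then V0.toReal else W (z * g ω) := by
      funext ω
      by_cases h : g ω = 0
      · simp [h]
      · simp only [h, if_false]
        rw [hW_eq _ (mul_pos hz (hgpos ω h)), EReal.toReal_coe]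
    rw [heq]
    exact (Measurable.ite hset measurable_const
      (hW_meas.comp (hg_meas.const_mul z))).aestronglyMeasurable
  -- integrability of the integrand
  have hF_int : ∀ z : ℝ, 0 < z → Integrable
      (fun ω => (if g ω = 0 then V0 else ((V (z * g ω) : ℝ) : EReal)).toReal) P := by
    intro z hz
    refine ⟨hF_meas1 z hz, ?_⟩
    rw [hasFiniteIntegral_def]
    refine lt_of_le_of_lt (lintegral_mono fun ω => ereal_nnnorm_toReal_le _) ?_
    exact lt_top_iff_ne_top.2 (hVg z hz)
  intro y hy
  -- the derivative candidate
  set F' : Ω → ℝ := fun ω => if g ω = 0 then 0 else -(g ω * I (y * g ω)) with hF'def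
  have hF'_meas : AEStronglyMeasurable F' P := by
    have heq : F' = fun ω => if g ω = 0 then 0 else -(g ω * J (y * g ω)) := by
      funext ω
      by_cases h : g ω = 0
      · simp [hF'def, h]
      · simp only [hF'def, h, if_false]
        rw [hJ_eq _ (mul_pos hy (hgpos ω h))]
    rw [heq]
    exact (Measurable.ite hset measurable_const
      ((hg_meas.mul (hJ_meas.comp (hg_meas.const_mul y))).neg)).aestronglyMeasurable
  -- the dominating Lipschitz bound
  set bound : Ω → ℝ := fun ω => if g ω = 0 then 0 else g ω * I ((y / 2) * g ω) with hbdef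
  have hbound_meas : AEStronglyMeasurable bound P := by
    have heq : bound = fun ω => if g ω = 0 then 0 else g ω * J ((y / 2) * g ω) := by
      funext ω
      by_cases h : g ω = 0
      · simp [hbdef, h]
      · simp only [hbdef, h, if_false]
        rw [hJ_eq _ (mul_pos (by linarith) (hgpos ω h))]
    rw [heq]
    exact (Measurable.ite hset measurable_const
      (hg_meas.mul (hJ_meas.comp (hg_meas.const_mul (y / 2))))).aestronglyMeasurable
  have hbound_int : Integrable bound P := by
    have h14 : (0:ℝ) < y / 4 := by linarith
    have h12 : (0:ℝ) < y / 2 := by linarith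
    have hint : Integrable (fun ω => (4 / y) *
        ((if g ω = 0 then V0 else ((V ((y/4) * g ω) : ℝ) : EReal)).toReal
          - (if g ω = 0 then V0 else ((V ((y/2) * g ω) : ℝ) : EReal)).toReal)) P :=
      ((hF_int (y/4) h14).sub (hF_int (y/2) h12)).const_mul (4 / y)
    refine Integrable.mono hint hbound_meas (Filter.Eventually.of_forall fun ω => ?_)
    by_cases h : g ω = 0
    · simp [hbdef, h]
    · have hg0 : 0 < g ω := hgpos ω h
      have hp : 0 < (y/2) * g ω := mul_pos h12 hg0
      have hq : 0 < (y/4) * g ω := mul_pos h14 hg0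
      have hIb : 0 < I ((y/2) * g ω) := hI_pos _ hp
      have hb0 : 0 ≤ g ω * I ((y/2) * g ω) := le_of_lt (mul_pos hg0 hIb)
      have hk := hkey ((y/2) * g ω) hp ((y/4) * g ω) hq
      -- V((y/2)g) - I((y/2)g) * ((y/4)g - (y/2)g) ≤ V((y/4)g)
      have h5 : I ((y/2) * g ω) * (y/4 * g ω) ≤ V ((y/4) * g ω) - V ((y/2) * g ω) := by
        linarith [hk]
      have h4y : (0:ℝ) < 4 / y := by positivity
      have h6 := mul_le_mul_of_nonneg_left h5 h4y.le
      have h7 : 4 / y * (I ((y/2) * g ω) * (y/4 * g ω)) = g ω * I ((y/2) * g ω) := by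
        field_simp
      have h8 : g ω * I ((y/2) * g ω) ≤ (4 / y) *
          (V ((y/4) * g ω) - V ((y/2) * g ω)) := by
        linarith [h6, h7]
      simp only [hbdef, h, if_false, EReal.toReal_coe]
      rw [Real.norm_eq_abs, Real.norm_eq_abs, abs_of_nonneg hb0]
      exact h8.trans (le_abs_self _)
  -- Lipschitz estimate on the ball
  have hlip : ∀ᵐ ω ∂P, LipschitzOnWith (Real.nnabs (bound ω))
      (fun z => (if g ω = 0 then V0 else ((V (z * g ω) : ℝ) : EReal)).toReal)
      (Metric.ball y (y / 2)) := by
    refine Filter.Eventually.of_forall fun ω => ?_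
    apply LipschitzOnWith.of_dist_le_mul
    intro z1 hz1 z2 hz2
    rw [Real.ball_eq_Ioo] at hz1 hz2
    have hz1p : y / 2 < z1 := by have := hz1.1; linarith
    have hz2p : y / 2 < z2 := by have := hz2.1; linarith
    by_cases h : g ω = 0
    · simp only [h, if_true]
      rw [dist_self]
      positivity
    · have hg0 : 0 < g ω := hgpos ω h
      simp only [h, if_false, EReal.toReal_coe]
      rw [Real.coe_nnabs, Real.dist_eq, Real.dist_eq]
      have hb0 : 0 ≤ bound ω := by
        simp only [hbdef, h, if_false]
        exact le_of_lt (mul_pos hg0 (hI_pos _ (mul_pos (by linarith) hg0)))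
      rw [abs_of_nonneg hb0]
      -- main two-point estimate, for a ≤ b both > y/2
      have main : ∀ a b : ℝ, y / 2 < a → a ≤ b →
          |V (a * g ω) - V (b * g ω)| ≤ bound ω * (b - a) := by
        intro a b ha hab
        have hap : 0 < a * g ω := mul_pos (by linarith) hg0
        have hbp : 0 < b * g ω := mul_pos (by linarith) hg0
        have hyp : 0 < (y/2) * g ω := mul_pos (by linarith) hg0
        have hIa : I (a * g ω) ≤ I ((y/2) * g ω) :=
          hI_anti _ hyp _ hap (mul_le_mul_of_nonneg_right (by linarith) hg0.le)
        have hIb0 : 0 < I (b * g ω) := hI_pos _ hbp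
        have hIa0 : 0 < I (a * g ω) := hI_pos _ hap
        have hk1 := hkey (a * g ω) hap (b * g ω) hbp
        -- V(ag) - I(ag)*(bg - ag) ≤ V(bg)
        have hk2 := hkey (b * g ω) hbp (a * g ω) hap
        -- V(bg) - I(bg)*(ag - bg) ≤ V(ag)
        have hc : (0:ℝ) ≤ (b - a) * g ω := mul_nonneg (by linarith) hg0.le
        have hmul := mul_le_mul_of_nonneg_right hIa hc
        have hlow : -(I ((y/2) * g ω) * g ω) * (b - a) ≤ V (b * g ω) - V (a * g ω) := by
          linarith [hk1, hmul]
        have hhigh : V (b * g ω) - V (a * g ω) ≤ 0 := by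
          linarith [hk2, mul_nonneg hIb0.le hc]
        rw [abs_sub_comm, abs_le]
        constructor
        · simp only [hbdef, h, if_false]
          linarith [hlow]
        · simp only [hbdef, h, if_false]
          linarith [hhigh, mul_nonneg (mul_nonneg hg0.le (hI_pos _ hyp).le)
            (by linarith : (0:ℝ) ≤ b - a)]
      rcases le_total z1 z2 with hz | hz
      · have := main z1 z2 hz1p hz
        calc |V (z1 * g ω) - V (z2 * g ω)| ≤ bound ω * (z2 - z1) := this
          _ ≤ bound ω * |z1 - z2| := by
              rw [abs_sub_comm, abs_of_nonneg (by linarith : (0:ℝ) ≤ z2 - z1)]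
      · have := main z2 z1 hz2p hz
        calc |V (z1 * g ω) - V (z2 * g ω)| = |V (z2 * g ω) - V (z1 * g ω)| := abs_sub_comm _ _
          _ ≤ bound ω * (z1 - z2) := this
          _ ≤ bound ω * |z1 - z2| := by
              rw [abs_of_nonneg (by linarith : (0:ℝ) ≤ z1 - z2)]
  -- pointwise differentiability
  have hdiff : ∀ᵐ ω ∂P, HasDerivAt
      (fun z => (if g ω = 0 then V0 else ((V (z * g ω) : ℝ) : EReal)).toReal) (F' ω) y := by
    refine Filter.Eventually.of_forall fun ω => ?_
    by_cases h : g ω = 0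
    · simp only [hF'def, h, if_true]
      exact hasDerivAt_const y _
    · have hg0 : 0 < g ω := hgpos ω h
      have hyg : 0 < y * g ω := mul_pos hy hg0
      have hcomp : HasDerivAt (fun z : ℝ => V (z * g ω)) (-(I (y * g ω)) * g ω) y := by
        have := (hV_deriv (y * g ω) hyg).comp y (hasDerivAt_mul_const (g ω))
        simpa [Function.comp_def] using this
      have hval : -(I (y * g ω)) * g ω = F' ω := by
        simp only [hF'def, h, if_false]; ring
      rw [← hval]
      refine HasDerivAt.congr_of_eventuallyEq hcomp ?_
      filter_upwards [eventually_gt_nhds hy] with z hz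
      simp [h, EReal.toReal_coe]
  have hF_meas_ev : ∀ᶠ z in 𝓝 y, AEStronglyMeasurable
      (fun ω => (if g ω = 0 then V0 else ((V (z * g ω) : ℝ) : EReal)).toReal) P := by
    filter_upwards [eventually_gt_nhds hy] with z hz using hF_meas1 z hz
  have main := hasDerivAt_integral_of_dominated_loc_of_lip
    (F := fun z ω => (if g ω = 0 then V0 else ((V (z * g ω) : ℝ) : EReal)).toReal)
    (F' := F') (x₀ := y) (bound := bound)
    (Metric.ball_mem_nhds y (by linarith : (0:ℝ) < y / 2)) hF_meas_ev (hF_int y hy) hF'_meas hlip hbound_int hdiff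
  constructor
  · refine (main.1.neg).congr (Filter.Eventually.of_forall fun ω => ?_)
    by_cases h : g ω = 0 <;> simp [hF'def, h]
  · have h2 := main.2
    have hval : (∫ ω, F' ω ∂P) = -(∫ ω, (if g ω = 0 then 0 else g ω * I (y * g ω)) ∂P) := by
      rw [← integral_neg]
      congr 1
      funext ω
      by_cases h : g ω = 0 <;> simp [hF'def, h]
    rwa [hval] at h2
end

section
/- Let (g_n)_{n∈ℕ} be a sequence of nonnegative integrable random variables on (Ω, F, P) with sup_n E[g_n] < ∞. Then there exist random variables h_n, each a finite convex combination of g_n, g_{n+1}, g_{n+2}, …, and a nonnegative, almost surely finite random variable g such that h_n → g almost surely. -/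
set_option linter.unusedSectionVars false
set_option linter.unusedVariables false
set_option maxHeartbeats 1000000

open Filter Set Topology MeasureTheory
open scoped ENNReal

namespace Komlos

variable {Ω : Type*} [MeasurableSpace Ω] {P : Measure Ω} [IsProbabilityMeasure P]

/-- forward convex combination predicate -/
def Comb (g : ℕ → Ω → ℝ) (n : ℕ) (f : Ω → ℝ) : Prop :=
  ∃ (s : Finset ℕ) (a : ℕ → ℝ),
    (∀ k ∈ s, n ≤ k) ∧ (∀ k ∈ s, 0 ≤ a k) ∧ (∑ k ∈ s, a k) = 1 ∧
    f = fun ω => ∑ k ∈ s, a k * g k ω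

variable {g : ℕ → Ω → ℝ} {n m : ℕ} {f f' : Ω → ℝ}

theorem comb_self (g : ℕ → Ω → ℝ) (n : ℕ) : Comb g n (g n) := by
  refine ⟨{n}, fun _ => 1, by simp, by simp, by simp, by simp⟩

theorem Comb.mono (hmn : m ≤ n) (hf : Comb g n f) : Comb g m f := by
  obtain ⟨s, a, h1, h2, h3, h4⟩ := hf
  exact ⟨s, a, fun k hk => hmn.trans (h1 k hk), h2, h3, h4⟩

theorem Comb.nonneg (hg : ∀ n ω, 0 ≤ g n ω) (hf : Comb g n f) : ∀ ω, 0 ≤ f ω := by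
  obtain ⟨s, a, h1, h2, h3, h4⟩ := hf
  intro ω
  rw [h4]
  exact Finset.sum_nonneg fun k hk => mul_nonneg (h2 k hk) (hg k ω)

theorem Comb.integrable (hg : ∀ n, Integrable (g n) P) (hf : Comb g n f) :
    Integrable f P := by
  obtain ⟨s, a, h1, h2, h3, h4⟩ := hf
  rw [h4]
  exact MeasureTheory.integrable_finset_sum s fun k _ => (hg k).const_mul _

theorem Comb.integral_le (hg : ∀ n, Integrable (g n) P)
    {C : ℝ} (hC : ∀ n, ∫ ω, g n ω ∂P ≤ C) (hf : Comb g n f) :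
    ∫ ω, f ω ∂P ≤ C := by
  obtain ⟨s, a, h1, h2, h3, h4⟩ := hf
  rw [h4]
  rw [MeasureTheory.integral_finset_sum s fun k _ => (hg k).const_mul _]
  calc ∑ k ∈ s, ∫ ω, a k * g k ω ∂P = ∑ k ∈ s, a k * ∫ ω, g k ω ∂P := by
        refine Finset.sum_congr rfl fun k _ => ?_
        exact MeasureTheory.integral_const_mul _ _
    _ ≤ ∑ k ∈ s, a k * C := by
        refine Finset.sum_le_sum fun k hk => ?_
        exact mul_le_mul_of_nonneg_left (hC k) (h2 k hk)
    _ = C := by rw [← Finset.sum_mul, h3, one_mul]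

theorem Comb.midpoint (hf : Comb g n f) (hf' : Comb g n f') :
    Comb g n (fun ω => (f ω + f' ω) / 2) := by
  obtain ⟨s, a, h1, h2, h3, h4⟩ := hf
  obtain ⟨t, c, k1, k2, k3, k4⟩ := hf'
  refine ⟨s ∪ t, fun k => (if k ∈ s then a k else 0) / 2 + (if k ∈ t then c k else 0) / 2,
    ?_, ?_, ?_, ?_⟩
  · intro k hk
    rcases Finset.mem_union.mp hk with h | h
    · exact h1 k h
    · exact k1 k h
  · intro k hk
    have : (0:ℝ) ≤ (if k ∈ s then a k else 0) := by
      split_ifs with h; exacts [h2 k h, le_refl 0]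
    have : (0:ℝ) ≤ (if k ∈ t then c k else 0) := by
      split_ifs with h; exacts [k2 k h, le_refl 0]
    positivity
  · rw [Finset.sum_add_distrib]
    rw [← Finset.sum_div, ← Finset.sum_div]
    rw [Finset.sum_ite_mem, Finset.sum_ite_mem]
    rw [Finset.union_inter_cancel_left, Finset.union_inter_cancel_right, h3, k3]
    norm_num
  · funext ω
    rw [h4, k4]
    simp only [add_mul, div_mul_eq_mul_div, ite_mul, zero_mul]
    rw [Finset.sum_add_distrib, ← Finset.sum_div, ← Finset.sum_div]
    rw [Finset.sum_ite_mem, Finset.sum_ite_mem]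
    rw [Finset.union_inter_cancel_left, Finset.union_inter_cancel_right]
    ring

/-- bounded concave utility -/
noncomputable def U (P : Measure Ω) (f : Ω → ℝ) : ℝ := ∫ ω, (1 - Real.exp (- f ω)) ∂P

theorem integrable_u (hf : Integrable f P) (hf0 : ∀ ω, 0 ≤ f ω) :
    Integrable (fun ω => 1 - Real.exp (- f ω)) P := by
  refine Integrable.mono' (integrable_const 1)
    ((continuous_const.sub (Real.continuous_exp.comp continuous_neg)).comp_aestronglyMeasurable
      hf.1) (ae_of_all _ fun ω => ?_)
  have h1 : 0 < Real.exp (-f ω) := Real.exp_pos _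
  have h2 : Real.exp (-f ω) ≤ 1 := Real.exp_le_one_iff.mpr (by linarith [hf0 ω])
  rw [Real.norm_eq_abs, abs_le]
  constructor <;> linarith

theorem U_le_one (hf : Integrable f P) (hf0 : ∀ ω, 0 ≤ f ω) : U P f ≤ 1 := by
  have : U P f ≤ ∫ (_ : Ω), (1:ℝ) ∂P := by
    refine integral_mono (integrable_u hf hf0) (integrable_const 1) fun ω => ?_
    have h1 : 0 < Real.exp (-f ω) := Real.exp_pos _
    simp only
    linarith
  simpa using this

theorem U_nonneg (hf : Integrable f P) (hf0 : ∀ ω, 0 ≤ f ω) : 0 ≤ U P f := by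
  refine integral_nonneg fun ω => ?_
  have h2 : Real.exp (-f ω) ≤ 1 := Real.exp_le_one_iff.mpr (by linarith [hf0 ω])
  simp only [Pi.zero_apply]
  linarith

theorem integrable_sq (hf : Integrable f P) (hf' : Integrable f' P)
    (hf0 : ∀ ω, 0 ≤ f ω) (hf'0 : ∀ ω, 0 ≤ f' ω) :
    Integrable (fun ω => (Real.exp (- f ω / 2) - Real.exp (- f' ω / 2)) ^ 2) P := by
  have m1 : AEStronglyMeasurable (fun ω => Real.exp (- f ω / 2)) P :=
    (Real.continuous_exp.comp ((continuous_neg).div_const 2)).comp_aestronglyMeasurable hf.1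
  have m2 : AEStronglyMeasurable (fun ω => Real.exp (- f' ω / 2)) P :=
    (Real.continuous_exp.comp ((continuous_neg).div_const 2)).comp_aestronglyMeasurable hf'.1
  refine Integrable.mono' (integrable_const 1) ((m1.sub m2).pow 2) (ae_of_all _ fun ω => ?_)
  have h1 : 0 < Real.exp (- f ω / 2) := Real.exp_pos _
  have h2 : Real.exp (- f ω / 2) ≤ 1 := Real.exp_le_one_iff.mpr (by nlinarith [hf0 ω])
  have h3 : 0 < Real.exp (- f' ω / 2) := Real.exp_pos _
  have h4 : Real.exp (- f' ω / 2) ≤ 1 := Real.exp_le_one_iff.mpr (by nlinarith [hf'0 ω])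
  rw [Real.norm_eq_abs, abs_le]
  constructor <;> nlinarith

/-- pointwise concavity-deficit identity for `x ↦ 1 - exp (-x)` -/
theorem pointwise_identity (x y : ℝ) :
    1 - Real.exp (-((x + y) / 2)) =
      ((1 - Real.exp (-x)) + (1 - Real.exp (-y))) / 2
        + (Real.exp (-x / 2) - Real.exp (-y / 2)) ^ 2 / 2 := by
  have hx : Real.exp (-x) = Real.exp (-x / 2) * Real.exp (-x / 2) := by
    rw [← Real.exp_add]; ring_nf
  have hy : Real.exp (-y) = Real.exp (-y / 2) * Real.exp (-y / 2) := by
    rw [← Real.exp_add]; ring_nf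
  have hxy : Real.exp (-((x + y) / 2)) = Real.exp (-x / 2) * Real.exp (-y / 2) := by
    rw [← Real.exp_add]; ring_nf
  rw [hx, hy, hxy]; ring

theorem U_midpoint (hf : Integrable f P) (hf' : Integrable f' P)
    (hf0 : ∀ ω, 0 ≤ f ω) (hf'0 : ∀ ω, 0 ≤ f' ω) :
    ∫ ω, (Real.exp (- f ω / 2) - Real.exp (- f' ω / 2)) ^ 2 ∂P
      = 2 * U P (fun ω => (f ω + f' ω) / 2) - U P f - U P f' := by
  have key : U P (fun ω => (f ω + f' ω) / 2)
      = (U P f + U P f') / 2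
        + (∫ ω, (Real.exp (- f ω / 2) - Real.exp (- f' ω / 2)) ^ 2 ∂P) / 2 := by
    have hrw : (fun ω => 1 - Real.exp (-((f ω + f' ω) / 2)))
        = fun ω => ((1 - Real.exp (- f ω)) + (1 - Real.exp (- f' ω))) / 2
            + (Real.exp (- f ω / 2) - Real.exp (- f' ω / 2)) ^ 2 / 2 :=
      funext fun ω => pointwise_identity (f ω) (f' ω)
    have i1 := integrable_u hf hf0
    have i2 := integrable_u hf' hf'0
    have i3 := integrable_sq (P := P) hf hf' hf0 hf'0
    calc U P (fun ω => (f ω + f' ω) / 2)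
        = ∫ ω, (((1 - Real.exp (- f ω)) + (1 - Real.exp (- f' ω))) / 2
            + (Real.exp (- f ω / 2) - Real.exp (- f' ω / 2)) ^ 2 / 2) ∂P := by
          rw [U]; exact congrArg _ hrw
      _ = (∫ ω, ((1 - Real.exp (- f ω)) + (1 - Real.exp (- f' ω))) ∂P) / 2
            + (∫ ω, (Real.exp (- f ω / 2) - Real.exp (- f' ω / 2)) ^ 2 ∂P) / 2 := by
          have i12 : Integrable (fun ω => ((1 - Real.exp (- f ω)) + (1 - Real.exp (- f' ω))) / 2) P :=
            (i1.add i2).div_const 2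
          have i3' : Integrable
              (fun ω => (Real.exp (- f ω / 2) - Real.exp (- f' ω / 2)) ^ 2 / 2) P :=
            i3.div_const 2
          rw [integral_add i12 i3', integral_div, integral_div]
      _ = (U P f + U P f') / 2
            + (∫ ω, (Real.exp (- f ω / 2) - Real.exp (- f' ω / 2)) ^ 2 ∂P) / 2 := by
          rw [integral_add i1 i2]; rfl
  rw [key]; ring

theorem selection (P : Measure Ω) [IsProbabilityMeasure P] (g : ℕ → Ω → ℝ)
    (hg_int : ∀ n, Integrable (g n) P) (hg_nonneg : ∀ n ω, 0 ≤ g n ω) :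
    ∃ h : ℕ → Ω → ℝ, (∀ k, Comb g k (h k)) ∧
      (∀ j k, j ≤ k →
        ∫ ω, (Real.exp (- h j ω / 2) - Real.exp (- h k ω / 2)) ^ 2 ∂P ≤ (1/4 : ℝ) ^ j) := by
  classical
  set S : ℕ → Set ℝ := fun n => U P '' {f | Comb g n f} with hS
  have hne : ∀ n, (S n).Nonempty := fun n => ⟨U P (g n), ⟨g n, comb_self g n, rfl⟩⟩
  have hbdd : ∀ n, BddAbove (S n) := by
    intro n
    refine ⟨1, fun x hx => ?_⟩
    obtain ⟨f, hf, rfl⟩ := hx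
    exact U_le_one (hf.integrable hg_int) (hf.nonneg hg_nonneg)
  set δ : ℕ → ℝ := fun n => sSup (S n) with hδ
  have hδ_anti : Antitone δ := by
    intro a b hab
    refine csSup_le_csSup (hbdd a) (hne b) ?_
    rintro x ⟨f, hf, rfl⟩
    exact ⟨f, hf.mono hab, rfl⟩
  have hδ0 : ∀ n, 0 ≤ δ n := by
    intro n
    refine le_trans (U_nonneg (hg_int n) (hg_nonneg n)) (le_csSup (hbdd n) ?_)
    exact ⟨g n, comb_self g n, rfl⟩
  have hbb : BddBelow (Set.range δ) := ⟨0, by rintro x ⟨n, rfl⟩; exact hδ0 n⟩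
  set σ : ℝ := ⨅ n, δ n with hσ
  have hσ_le : ∀ n, σ ≤ δ n := fun n => ciInf_le hbb n
  set ε : ℕ → ℝ := fun k => (1/4 : ℝ) ^ (k + 1) with hε
  have hεpos : ∀ k, 0 < ε k := fun k => by positivity
  have hε_anti : ∀ j k, j ≤ k → ε k ≤ ε j := by
    intro j k hjk
    exact pow_le_pow_of_le_one (by norm_num) (by norm_num) (by omega)
  have hm : ∀ k : ℕ, ∃ n, δ n < σ + ε k := by
    intro k
    refine exists_lt_of_ciInf_lt ?_
    rw [← hσ]; linarith [hεpos k]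
  choose m hm' using hm
  obtain ⟨N, hN0, hNs⟩ : ∃ N : ℕ → ℕ, (∀ k, m k ≤ N k) ∧ (∀ k, N k < N (k + 1)) := by
    refine ⟨fun k => Nat.rec (m 0) (fun k ih => max (m (k + 1)) (ih + 1)) k, ?_, ?_⟩
    · intro k
      cases k with
      | zero => exact le_refl _
      | succ k => exact le_max_left _ _
    · intro k
      exact lt_of_lt_of_le (Nat.lt_succ_self _) (le_max_right _ _)
  have hNmono : StrictMono N := strictMono_nat_of_lt_succ hNs
  have hNk : ∀ k, k ≤ N k := fun k => hNmono.le_apply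
  have hδN : ∀ k, δ (N k) < σ + ε k := fun k =>
    lt_of_le_of_lt (hδ_anti (hN0 k)) (hm' k)
  have hsel : ∀ k : ℕ, ∃ f : Ω → ℝ, Comb g (N k) f ∧ δ (N k) - ε k < U P f := by
    intro k
    have h1 : δ (N k) - ε k < sSup (S (N k)) := by
      have : δ (N k) - ε k < δ (N k) := by linarith [hεpos k]
      exact this
    obtain ⟨x, hx, hlt⟩ := exists_lt_of_lt_csSup (hne (N k)) h1
    obtain ⟨f, hf, rfl⟩ := hx
    exact ⟨f, hf, hlt⟩
  choose h hcomb hU using hsel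
  refine ⟨h, fun k => (hcomb k).mono (hNk k), ?_⟩
  intro j k hjk
  have hmid : Comb g (N j) (fun ω => (h j ω + h k ω) / 2) :=
    (hcomb j).midpoint ((hcomb k).mono (hNmono.monotone hjk))
  have hUmid : U P (fun ω => (h j ω + h k ω) / 2) ≤ δ (N j) :=
    le_csSup (hbdd (N j)) ⟨_, hmid, rfl⟩
  have hUj : σ - ε j < U P (h j) := lt_of_le_of_lt (by linarith [hσ_le (N j)]) (hU j)
  have hUk : σ - ε k < U P (h k) := lt_of_le_of_lt (by linarith [hσ_le (N k)]) (hU k)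
  have key := U_midpoint (P := P) ((hcomb j).integrable hg_int) ((hcomb k).integrable hg_int)
    ((hcomb j).nonneg hg_nonneg) ((hcomb k).nonneg hg_nonneg)
  rw [key]
  have h4 : (4 : ℝ) * ε j = (1/4 : ℝ) ^ j := by
    show (4:ℝ) * (1/4 : ℝ) ^ (j + 1) = (1/4 : ℝ) ^ j
    rw [pow_succ]
    ring
  have hεkj := hε_anti j k hjk
  have hδNj := hδN j
  linarith

end Komlos

/-- Komlós-type lemma: Given nonnegative integrable random variables `g_n` with
`sup_n E[g_n] < ∞`, there are forward convex combinations `h_n ∈ conv(g_n, g_{n+1}, …)` and a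
nonnegative (almost surely finite, i.e. real-valued) random variable `g` with `h_n → g` a.s. -/
theorem forward_convex_combinations_converge
    {Ω : Type*} [MeasurableSpace Ω] (P : Measure Ω) [IsProbabilityMeasure P]
    (g : ℕ → Ω → ℝ)
    (hg_int : ∀ n, Integrable (g n) P)
    (hg_nonneg : ∀ n ω, 0 ≤ g n ω)
    (C : ℝ) (hC : ∀ n, ∫ ω, g n ω ∂P ≤ C) :
    ∃ (h : ℕ → Ω → ℝ) (glim : Ω → ℝ),
      (∀ n, ∃ (s : Finset ℕ) (a : ℕ → ℝ),
        (∀ k ∈ s, n ≤ k) ∧ (∀ k ∈ s, 0 ≤ a k) ∧ (∑ k ∈ s, a k) = 1 ∧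
        h n = fun ω => ∑ k ∈ s, a k * g k ω) ∧
      (∀ ω, 0 ≤ glim ω) ∧
      (∀ᵐ ω ∂P, Filter.Tendsto (fun n => h n ω) Filter.atTop (nhds (glim ω))) := by
  classical
  obtain ⟨h, hcomb, hsq⟩ := Komlos.selection P g hg_int hg_nonneg
  have hint : ∀ k, Integrable (h k) P := fun k => (hcomb k).integrable hg_int
  have hpos : ∀ k ω, 0 ≤ h k ω := fun k => (hcomb k).nonneg hg_nonneg
  have hIC : ∀ k, ∫ ω, h k ω ∂P ≤ C := fun k => (hcomb k).integral_le hg_int hC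
  set φ : ℕ → Ω → ℝ := fun k ω => Real.exp (- h k ω / 2) with hφ
  have hφpos : ∀ k ω, 0 < φ k ω := fun k ω => Real.exp_pos _
  have hφle : ∀ k ω, φ k ω ≤ 1 := fun k ω =>
    Real.exp_le_one_iff.mpr (by nlinarith [hpos k ω])
  have hφm : ∀ k, AEStronglyMeasurable (φ k) P := fun k =>
    (Real.continuous_exp.comp (continuous_neg.div_const 2)).comp_aestronglyMeasurable (hint k).1
  set d : ℕ → Ω → ℝ := fun j ω => φ (j + 1) ω - φ j ω with hd
  have hdm : ∀ j, AEStronglyMeasurable (d j) P := fun j => (hφm (j + 1)).sub (hφm j)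
  -- square-integral bound for increments
  have hdint : ∀ j, Integrable (fun ω => (d j ω) ^ 2) P := by
    intro j
    have := Komlos.integrable_sq (P := P) (hint j) (hint (j + 1)) (hpos j) (hpos (j + 1))
    have heq : (fun ω => (Real.exp (- h j ω / 2) - Real.exp (- h (j + 1) ω / 2)) ^ 2)
        = fun ω => (d j ω) ^ 2 := by
      funext ω
      simp only [hd, hφ]
      ring
    rwa [heq] at this
  have hdsq : ∀ j, ∫ ω, (d j ω) ^ 2 ∂P ≤ (1/4 : ℝ) ^ j := by
    intro j
    have := hsq j (j + 1) (Nat.le_succ j)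
    have heq : (fun ω => (Real.exp (- h j ω / 2) - Real.exp (- h (j + 1) ω / 2)) ^ 2)
        = fun ω => (d j ω) ^ 2 := by
      funext ω
      simp only [hd, hφ]
      ring
    rwa [heq] at this
  -- the ENNReal-valued series of weighted squared increments
  set q : ℕ → Ω → ℝ≥0∞ := fun j ω => ENNReal.ofReal ((2:ℝ) ^ j * (d j ω) ^ 2) with hq
  have hqm : ∀ j, AEMeasurable (q j) P := by
    intro j
    have : AEStronglyMeasurable (fun ω => (2:ℝ) ^ j * (d j ω) ^ 2) P :=
      (((hdm j).pow 2).const_mul _)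
    exact this.aemeasurable.ennreal_ofReal
  have hqint : ∀ j, ∫⁻ ω, q j ω ∂P ≤ ENNReal.ofReal ((1/2 : ℝ) ^ j) := by
    intro j
    have hqi : Integrable (fun ω => (2:ℝ) ^ j * (d j ω) ^ 2) P := (hdint j).const_mul _
    have h0 : 0 ≤ᵐ[P] fun ω => (2:ℝ) ^ j * (d j ω) ^ 2 :=
      ae_of_all _ fun ω => by positivity
    rw [hq]
    rw [← MeasureTheory.ofReal_integral_eq_lintegral_ofReal hqi h0]
    apply ENNReal.ofReal_le_ofReal
    rw [MeasureTheory.integral_const_mul]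
    calc (2:ℝ) ^ j * ∫ ω, (d j ω) ^ 2 ∂P ≤ (2:ℝ) ^ j * (1/4 : ℝ) ^ j := by
          exact mul_le_mul_of_nonneg_left (hdsq j) (by positivity)
      _ = (1/2 : ℝ) ^ j := by
          rw [← mul_pow]; norm_num
  set F : Ω → ℝ≥0∞ := fun ω => ∑' j, q j ω with hF
  have hFint : ∫⁻ ω, F ω ∂P ≠ ⊤ := by
    have h1 : ∫⁻ ω, F ω ∂P = ∑' j, ∫⁻ ω, q j ω ∂P := lintegral_tsum hqm
    have h2 : ∑' j, ∫⁻ ω, q j ω ∂P ≤ ∑' j, ENNReal.ofReal ((1/2 : ℝ) ^ j) :=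
      ENNReal.tsum_le_tsum hqint
    have h3 : ∑' (j : ℕ), ENNReal.ofReal ((1/2 : ℝ) ^ j) ≠ ⊤ := by
      have heq : ∀ j : ℕ, ENNReal.ofReal ((1/2 : ℝ) ^ j) = ENNReal.ofReal (1/2) ^ j :=
        fun j => ENNReal.ofReal_pow (by norm_num) j
      rw [tsum_congr heq, ENNReal.tsum_geometric]
      rw [Ne, ENNReal.inv_eq_top, tsub_eq_zero_iff_le]
      exact not_le.mpr (ENNReal.ofReal_lt_one.mpr (by norm_num))
    rw [h1]
    exact ne_top_of_le_ne_top h3 h2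
  have hFae : ∀ᵐ ω ∂P, F ω < ⊤ := by
    set Q : ℕ → Ω → ℝ≥0∞ := fun j => (hqm j).mk _ with hQ
    have hQm : ∀ j, Measurable (Q j) := fun j => (hqm j).measurable_mk
    have hQe : ∀ᵐ ω ∂P, ∀ j, q j ω = Q j ω := ae_all_iff.mpr fun j => (hqm j).ae_eq_mk
    have hFQ : F =ᵐ[P] fun ω => ∑' j, Q j ω := by
      filter_upwards [hQe] with ω hω
      exact tsum_congr hω
    have hmeas : Measurable (fun ω => ∑' j, Q j ω) := Measurable.ennreal_tsum hQm
    have : ∫⁻ ω, ∑' j, Q j ω ∂P ≠ ⊤ := by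
      rwa [lintegral_congr_ae hFQ] at hFint
    filter_upwards [ae_lt_top hmeas this, hFQ] with ω h1 h2
    rw [hF]
    calc ∑' j, q j ω = ∑' j, Q j ω := h2
      _ < ⊤ := h1
  -- Fatou: liminf of h is a.e. finite
  set u : ℕ → Ω → ℝ≥0∞ := fun k ω => ENNReal.ofReal (h k ω) with hu
  have hum : ∀ k, AEMeasurable (u k) P := fun k => (hint k).1.aemeasurable.ennreal_ofReal
  have huint : ∀ k, ∫⁻ ω, u k ω ∂P ≤ ENNReal.ofReal C := by
    intro k
    rw [hu, ← MeasureTheory.ofReal_integral_eq_lintegral_ofReal (hint k)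
      (ae_of_all _ fun ω => hpos k ω)]
    exact ENNReal.ofReal_le_ofReal (hIC k)
  have hHae : ∀ᵐ ω ∂P, Filter.liminf (fun k => u k ω) Filter.atTop < ⊤ := by
    set V : ℕ → Ω → ℝ≥0∞ := fun k => (hum k).mk _ with hV
    have hVm : ∀ k, Measurable (V k) := fun k => (hum k).measurable_mk
    have hVe : ∀ᵐ ω ∂P, ∀ k, u k ω = V k ω := ae_all_iff.mpr fun k => (hum k).ae_eq_mk
    have hmeas : Measurable (fun ω => Filter.liminf (fun k => V k ω) Filter.atTop) :=
      Measurable.liminf hVm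
    have hbound : ∫⁻ ω, Filter.liminf (fun k => V k ω) Filter.atTop ∂P ≠ ⊤ := by
      have h1 : ∫⁻ ω, Filter.liminf (fun k => V k ω) Filter.atTop ∂P
          ≤ Filter.liminf (fun k => ∫⁻ ω, V k ω ∂P) Filter.atTop :=
        MeasureTheory.lintegral_liminf_le hVm
      have h2 : Filter.liminf (fun k => ∫⁻ ω, V k ω ∂P) Filter.atTop ≤ ENNReal.ofReal C := by
        have h3 : ∀ k, ∫⁻ ω, V k ω ∂P ≤ ENNReal.ofReal C := by
          intro k
          rw [← lintegral_congr_ae (hum k).ae_eq_mk]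
          exact huint k
        calc Filter.liminf (fun k => ∫⁻ ω, V k ω ∂P) Filter.atTop
            ≤ Filter.liminf (fun _ : ℕ => ENNReal.ofReal C) Filter.atTop :=
              Filter.liminf_le_liminf (Filter.Eventually.of_forall h3)
          _ = ENNReal.ofReal C := Filter.liminf_const _
      exact ne_top_of_le_ne_top (by simp [ENNReal.ofReal_lt_top.ne]) (h1.trans h2)
    filter_upwards [ae_lt_top hmeas hbound, hVe] with ω h1 h2
    have : (fun k => u k ω) = fun k => V k ω := funext h2
    rw [this]
    exact h1
  -- limit candidate
  set Lf : Ω → ℝ := fun ω => Filter.liminf (fun k => φ k ω) Filter.atTop with hLf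
  set glim : Ω → ℝ := fun ω =>
    if 0 < Lf ω ∧ Lf ω ≤ 1 then -2 * Real.log (Lf ω) else 0 with hglim
  have hglim_nonneg : ∀ ω, 0 ≤ glim ω := by
    intro ω
    simp only [hglim]
    split_ifs with hcond
    · have := Real.log_nonpos (le_of_lt hcond.1) hcond.2
      linarith
    · exact le_refl 0
  clear_value glim Lf u F q d φ
  refine ⟨h, glim, fun n => hcomb n, hglim_nonneg, ?_⟩
  filter_upwards [hFae, hHae] with ω hFω hHω
  -- pointwise: summability of increments
  have hsum1 : Summable (fun j => (2:ℝ) ^ j * (d j ω) ^ 2) := by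
    have h1 : (∑' j, q j ω) ≠ ⊤ := by
      simp only [hF] at hFω
      exact hFω.ne
    have h2 := ENNReal.summable_toReal h1
    refine h2.congr fun j => ?_
    rw [hq]
    exact ENNReal.toReal_ofReal (by positivity)
  have key : ∀ (j : ℕ) (x : ℝ), |x| ≤ (1/2 : ℝ) ^ j + (2:ℝ) ^ j * x ^ 2 := by
    intro j x
    have hnn : (0:ℝ) ≤ (2:ℝ) ^ j * x ^ 2 := by positivity
    by_cases hc : |x| ≤ (1/2 : ℝ) ^ j
    · linarith
    · push_neg at hc
      have h1 : (2:ℝ) ^ j * (1/2 : ℝ) ^ j = 1 := by rw [← mul_pow]; norm_num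
      have h2 : x ^ 2 = |x| * |x| := by rw [← sq_abs]; ring
      have h3 : (1:ℝ) < (2:ℝ) ^ j * |x| := by
        calc (1:ℝ) = 2 ^ j * (1/2) ^ j := h1.symm
          _ < 2 ^ j * |x| := mul_lt_mul_of_pos_left hc (pow_pos two_pos j)
      have h4 : |x| ≤ (2:ℝ) ^ j * x ^ 2 := by
        calc |x| = 1 * |x| := (one_mul _).symm
          _ ≤ ((2:ℝ) ^ j * |x|) * |x| := mul_le_mul_of_nonneg_right h3.le (abs_nonneg x)
          _ = 2 ^ j * x ^ 2 := by rw [h2]; ring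
      have h5 : (0:ℝ) < (1/2 : ℝ) ^ j := by positivity
      linarith
  have hcmp : ∀ j : ℕ, |d j ω| ≤ (1/2 : ℝ) ^ j + (2:ℝ) ^ j * (d j ω) ^ 2 :=
    fun j => key j (d j ω)
  have hsum2 : Summable (fun j => |d j ω|) :=
    Summable.of_nonneg_of_le (fun j => abs_nonneg _) hcmp
      (((summable_geometric_of_lt_one (by norm_num) (by norm_num) :
        Summable fun j : ℕ => (1/2 : ℝ) ^ j)).add hsum1)
  have hsum3 : Summable (fun j => d j ω) := hsum2.of_abs
  -- convergence of φ
  have htel : ∀ n : ℕ, ∑ j ∈ Finset.range n, d j ω = φ n ω - φ 0 ω := by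
    intro n
    simp only [hd]
    exact Finset.sum_range_sub (fun j => φ j ω) n
  have htφ : Filter.Tendsto (fun n => φ n ω) Filter.atTop
      (nhds (φ 0 ω + ∑' j, d j ω)) := by
    have ht := hsum3.hasSum.tendsto_sum_nat
    have ht2 := ht.const_add (φ 0 ω)
    have ht3 : (fun n => φ 0 ω + ∑ j ∈ Finset.range n, d j ω) = fun n => φ n ω :=
      funext fun n => by rw [htel n]; ring
    rwa [ht3] at ht2
  have hLfω : Lf ω = φ 0 ω + ∑' j, d j ω := by
    simp only [hLf]
    exact htφ.liminf_eq
  have htφ' : Filter.Tendsto (fun n => φ n ω) Filter.atTop (nhds (Lf ω)) := by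
    rw [hLfω]; exact htφ
  have hL1 : Lf ω ≤ 1 := le_of_tendsto htφ' (Filter.Eventually.of_forall fun k => hφle k ω)
  have hL0 : 0 ≤ Lf ω := ge_of_tendsto htφ' (Filter.Eventually.of_forall fun k => le_of_lt (hφpos k ω))
  have hLpos : 0 < Lf ω := by
    rcases lt_or_eq_of_le hL0 with hlt | heq
    · exact hlt
    · exfalso
      -- φ → 0, hence h → ∞, contradicting finiteness of liminf
      have hzero : Filter.Tendsto (fun n => φ n ω) Filter.atTop (nhds 0) := by
        rw [heq]; exact htφ'
      have hin : Filter.Tendsto (fun n => φ n ω) Filter.atTop (nhdsWithin 0 (Set.Ioi 0)) :=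
        tendsto_nhdsWithin_of_tendsto_nhds_of_eventually_within _ hzero
          (Filter.Eventually.of_forall fun k => hφpos k ω)
      have hlog : Filter.Tendsto (fun n => Real.log (φ n ω)) Filter.atTop Filter.atBot :=
        Real.tendsto_log_nhdsGT_zero.comp hin
      have hneg : Filter.Tendsto (fun n => (2:ℝ) * (- Real.log (φ n ω))) Filter.atTop
          Filter.atTop :=
        Filter.Tendsto.const_mul_atTop (by norm_num) (Filter.tendsto_neg_atTop_iff.mpr hlog)
      have hhh : Filter.Tendsto (fun n => h n ω) Filter.atTop Filter.atTop := by
        have hfe : (fun n => (2:ℝ) * (- Real.log (φ n ω))) = fun n => h n ω := by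
          funext n
          rw [hφ]
          simp only
          rw [Real.log_exp]
          ring
        rwa [hfe] at hneg
      have hinf : Filter.Tendsto (fun n => u n ω) Filter.atTop (nhds ⊤) := by
        simp only [hu]
        exact ENNReal.tendsto_ofReal_atTop.comp hhh
      have : Filter.liminf (fun k => u k ω) Filter.atTop = ⊤ := hinf.liminf_eq
      rw [this] at hHω
      exact lt_irrefl _ hHω
  -- final convergence
  have hglimω : glim ω = -2 * Real.log (Lf ω) := by
    rw [hglim]
    exact if_pos ⟨hLpos, hL1⟩
  rw [hglimω]
  have hlogc : Filter.Tendsto (fun n => Real.log (φ n ω)) Filter.atTop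
      (nhds (Real.log (Lf ω))) :=
    ((Real.continuousAt_log (ne_of_gt hLpos)).tendsto).comp htφ'
  have := hlogc.const_mul (-2 : ℝ)
  have hfe : (fun n => (-2:ℝ) * Real.log (φ n ω)) = fun n => h n ω := by
    funext n
    rw [hφ]
    simp only
    rw [Real.log_exp]
    ring
  rwa [hfe] at this
end

section
/- Fix y > 0 and let D be a nonempty convex subset of L¹₊(P) × ℝ. Define J(f, c) := E[V(y·f)] + y·c for (f,c) ∈ D, where V(y·f(ω)) is interpreted as V(0) = U(∞) on {f = 0} and E[V(y·f)] is well-defined in (−∞, ∞] because V admits the affine minorant V(z) ≥ U(1) − z. If (f₁, c₁) and (f₂, c₂) both attain the infimum of J over D and this infimum is finite, then f₁ = f₂ P-almost surely. -/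
open Filter Set Topology MeasureTheory
open scoped ENNReal

/-- The expectation of an `EReal`-valued random variable, defined as the (`ℝ≥0∞`-valued)
integral of its positive part minus that of its negative part, as an extended real. -/
noncomputable def erealExpectation {Ω : Type*} [MeasurableSpace Ω]
    (P : MeasureTheory.Measure Ω) (h : Ω → EReal) : EReal :=
  ((∫⁻ ω, (max (h ω) 0).abs ∂P : ℝ≥0∞) : EReal) -
    ((∫⁻ ω, (min (h ω) 0).abs ∂P : ℝ≥0∞) : EReal)

/-- The conjugate `V`, extended to `[0,∞)` by the value `V0 = V(0) := U(∞)` at `0`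
(arguments `z ≤ 0` are sent to `V0`; only `z ≥ 0` is ever used). -/
noncomputable def extendedV (V : ℝ → ℝ) (V0 : EReal) (z : ℝ) : EReal :=
  if 0 < z then (V z : EReal) else V0

lemma ereal_abs_max_coe (x : ℝ) : (max ((x : ℝ) : EReal) 0).abs = ENNReal.ofReal x := by
  rcases le_total x 0 with h | h
  · rw [max_eq_right (by exact_mod_cast h), EReal.abs_zero,
      Eq.symm (ENNReal.ofReal_eq_zero.mpr h)]
  · rw [max_eq_left (by exact_mod_cast h), EReal.abs_def, abs_of_nonneg h]

lemma ereal_abs_min_coe (x : ℝ) : (min ((x : ℝ) : EReal) 0).abs = ENNReal.ofReal (-x) := by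
  rcases le_total x 0 with h | h
  · rw [min_eq_left (by exact_mod_cast h), EReal.abs_def, abs_of_nonpos h]
  · rw [min_eq_right (by exact_mod_cast h), EReal.abs_zero,
      (ENNReal.ofReal_eq_zero.mpr (neg_nonpos.mpr h)).symm]

lemma erealExpectation_congr {Ω : Type*} [MeasurableSpace Ω] (P : Measure Ω)
    {h h' : Ω → EReal} (hh : h =ᵐ[P] h') :
    erealExpectation P h = erealExpectation P h' := by
  have e1 : (fun ω => (max (h ω) 0).abs) =ᵐ[P] fun ω => (max (h' ω) 0).abs :=
    hh.mono fun ω hω => by simp only [hω]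
  have e2 : (fun ω => (min (h ω) 0).abs) =ᵐ[P] fun ω => (min (h' ω) 0).abs :=
    hh.mono fun ω hω => by simp only [hω]
  unfold erealExpectation
  rw [lintegral_congr_ae e1, lintegral_congr_ae e2]

lemma lintegral_ofReal_lt_top {Ω : Type*} [MeasurableSpace Ω] {P : Measure Ω}
    {φ : Ω → ℝ} (hφ : Integrable φ P) : ∫⁻ ω, ENNReal.ofReal (φ ω) ∂P < ⊤ := by
  refine lt_of_le_of_lt (lintegral_mono fun ω => ?_) hφ.2
  rw [← ofReal_norm]
  exact ENNReal.ofReal_le_ofReal (le_abs_self _)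

lemma erealExpectation_coe {Ω : Type*} [MeasurableSpace Ω] (P : Measure Ω)
    {φ : Ω → ℝ} (hφ : Integrable φ P) :
    erealExpectation P (fun ω => ((φ ω : ℝ) : EReal)) = ((∫ ω, φ ω ∂P : ℝ) : EReal) := by
  unfold erealExpectation
  simp only [ereal_abs_max_coe, ereal_abs_min_coe]
  rw [integral_eq_lintegral_pos_part_sub_lintegral_neg_part hφ]
  have hp : ∫⁻ ω, ENNReal.ofReal (φ ω) ∂P ≠ ⊤ := (lintegral_ofReal_lt_top hφ).ne
  have hq : ∫⁻ ω, ENNReal.ofReal (-φ ω) ∂P ≠ ⊤ := (lintegral_ofReal_lt_top hφ.neg).ne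
  set p := ∫⁻ ω, ENNReal.ofReal (φ ω) ∂P
  set q := ∫⁻ ω, ENNReal.ofReal (-φ ω) ∂P
  rw [EReal.coe_sub, ← ENNReal.ofReal_toReal hp, ← ENNReal.ofReal_toReal hq,
    EReal.coe_ennreal_ofReal, EReal.coe_ennreal_ofReal,
    max_eq_left ENNReal.toReal_nonneg, max_eq_left ENNReal.toReal_nonneg,
    ENNReal.ofReal_toReal hp, ENNReal.ofReal_toReal hq]

lemma tangent_lt {U U' : ℝ → ℝ}
    (hU_conc : StrictConcaveOn ℝ (Set.Ioi 0) U)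
    (hU_deriv : ∀ x ∈ Set.Ioi (0:ℝ), HasDerivAt U (U' x) x)
    {x t : ℝ} (hx : 0 < x) (ht : 0 < t) (hne : t ≠ x) :
    U t - t * U' x < U x - x * U' x := by
  rcases hne.lt_or_gt with hlt | hlt
  · have hs := hU_conc.lt_slope_of_hasDerivAt (Set.mem_Ioi.mpr ht) (Set.mem_Ioi.mpr hx)
      hlt (hU_deriv x (Set.mem_Ioi.mpr hx))
    rw [slope_def_field] at hs
    have hxt : 0 < x - t := by linarith
    rw [lt_div_iff₀ hxt] at hs
    nlinarith
  · have hs := hU_conc.slope_lt_of_hasDerivAt (Set.mem_Ioi.mpr hx) (Set.mem_Ioi.mpr ht)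
      hlt (hU_deriv x (Set.mem_Ioi.mpr hx))
    rw [slope_def_field] at hs
    have hxt : 0 < t - x := by linarith
    rw [div_lt_iff₀ hxt] at hs
    nlinarith

lemma V_eq_of {U U' V I : ℝ → ℝ}
    (hU_conc : StrictConcaveOn ℝ (Set.Ioi 0) U)
    (hU_deriv : ∀ x ∈ Set.Ioi (0:ℝ), HasDerivAt U (U' x) x)
    (hV : ∀ y > 0, IsLUB {z : ℝ | ∃ x > 0, z = U x - x * y} (V y))
    (hI_pos : ∀ y > 0, 0 < I y) (hI_left : ∀ y > 0, U' (I y) = y)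
    {w : ℝ} (hw : 0 < w) : V w = U (I w) - I w * w := by
  have hx := hI_pos w hw
  have hUx : U' (I w) = w := hI_left w hw
  refine le_antisymm ((hV w hw).2 ?_) ((hV w hw).1 ⟨I w, hx, rfl⟩)
  rintro z ⟨t, ht, rfl⟩
  rcases eq_or_ne t (I w) with rfl | hne
  · exact le_refl _
  · have h := tangent_lt hU_conc hU_deriv hx ht hne
    rw [hUx] at h
    exact h.le

lemma V_gt_of {U U' V I : ℝ → ℝ}
    (hU_conc : StrictConcaveOn ℝ (Set.Ioi 0) U)
    (hU_deriv : ∀ x ∈ Set.Ioi (0:ℝ), HasDerivAt U (U' x) x)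
    (hV : ∀ y > 0, IsLUB {z : ℝ | ∃ x > 0, z = U x - x * y} (V y))
    (hI_pos : ∀ y > 0, 0 < I y) (hI_left : ∀ y > 0, U' (I y) = y)
    {w t : ℝ} (hw : 0 < w) (ht : 0 < t) (hne : t ≠ I w) :
    U t - t * w < V w := by
  rw [V_eq_of hU_conc hU_deriv hV hI_pos hI_left hw]
  have h := tangent_lt hU_conc hU_deriv (hI_pos w hw) ht hne
  rwa [hI_left w hw] at h

lemma U_lt_V0_of {U : ℝ → ℝ} {V0 : EReal}
    (hU_incr : StrictMonoOn U (Set.Ioi 0))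
    (hV0 : Filter.Tendsto (fun x => (U x : EReal)) Filter.atTop (nhds V0))
    {x : ℝ} (hx : 0 < x) : ((U x : ℝ) : EReal) < V0 := by
  have h1 : ((U (x+1) : ℝ) : EReal) ≤ V0 := by
    refine ge_of_tendsto hV0 (Filter.eventually_atTop.2 ⟨x + 1, fun t ht => ?_⟩)
    exact_mod_cast hU_incr.monotoneOn (Set.mem_Ioi.mpr (by linarith))
      (Set.mem_Ioi.mpr (by linarith)) ht
  refine lt_of_lt_of_le ?_ h1
  exact_mod_cast hU_incr (Set.mem_Ioi.mpr hx) (Set.mem_Ioi.mpr (by linarith)) (by linarith)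

lemma extendedV_antitone {U V : ℝ → ℝ} {V0 : EReal}
    (hV : ∀ y > 0, IsLUB {z : ℝ | ∃ x > 0, z = U x - x * y} (V y))
    (hUlt : ∀ x > 0, ((U x : ℝ) : EReal) < V0) :
    Antitone (extendedV V V0) := by
  intro a b hab
  unfold extendedV
  by_cases hb : 0 < b
  · rw [if_pos hb]
    by_cases ha : 0 < a
    · rw [if_pos ha]
      have : V b ≤ V a := by
        refine (hV b hb).2 ?_
        rintro z ⟨x, hx, rfl⟩
        refine le_trans ?_ ((hV a ha).1 ⟨x, hx, rfl⟩)
        nlinarith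
      exact_mod_cast this
    · rw [if_neg ha]
      by_cases htop : V0 = ⊤
      · rw [htop]; exact le_top
      · have hbot : V0 ≠ ⊥ := fun h => absurd (h ▸ hUlt 1 one_pos) (by simp)
        have hr : V0 = ((V0.toReal : ℝ) : EReal) := (EReal.coe_toReal htop hbot).symm
        have hVb : V b ≤ V0.toReal := by
          refine (hV b hb).2 ?_
          rintro z ⟨x, hx, rfl⟩
          have h1 : ((U x : ℝ) : EReal) < ((V0.toReal : ℝ) : EReal) := hr ▸ hUlt x hx
          have h2 : U x ≤ V0.toReal := (EReal.coe_lt_coe_iff.mp h1).le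
          nlinarith
        rw [hr]
        exact_mod_cast hVb
  · have ha : ¬ 0 < a := fun h => hb (lt_of_lt_of_le h hab)
    rw [if_neg ha, if_neg hb]

lemma extendedV_strict_midpoint {U U' V I : ℝ → ℝ} {V0 : EReal}
    (hU_conc : StrictConcaveOn ℝ (Set.Ioi 0) U)
    (hU_deriv : ∀ x ∈ Set.Ioi (0:ℝ), HasDerivAt U (U' x) x)
    (hV : ∀ y > 0, IsLUB {z : ℝ | ∃ x > 0, z = U x - x * y} (V y))
    (hI_pos : ∀ y > 0, 0 < I y) (hI_left : ∀ y > 0, U' (I y) = y)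
    (hUlt : ∀ x > 0, ((U x : ℝ) : EReal) < V0)
    {z₁ z₂ : ℝ} (h1 : 0 ≤ z₁) (h2 : 0 ≤ z₂) (hne : z₁ ≠ z₂) :
    extendedV V V0 ((z₁ + z₂)/2) + extendedV V V0 ((z₁ + z₂)/2)
      < extendedV V V0 z₁ + extendedV V V0 z₂ := by
  have hm : 0 < (z₁ + z₂)/2 := by
    by_cases hz1 : 0 < z₁
    · linarith
    · have e1 : z₁ = 0 := le_antisymm (not_lt.mp hz1) h1
      have : 0 < z₂ := h2.lt_of_ne (fun h => hne (by rw [e1, ← h]))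
      linarith
  set m := (z₁ + z₂)/2 with hm_def
  set x := I m with hx_def
  have hx : 0 < x := hI_pos m hm
  have hxm : U' x = m := hI_left m hm
  have hWm : extendedV V V0 m = ((U x - x * m : ℝ) : EReal) := by
    unfold extendedV
    rw [if_pos hm, V_eq_of hU_conc hU_deriv hV hI_pos hI_left hm]
  have hm1 : z₁ ≠ m := by intro h; apply hne; rw [hm_def] at h; linarith
  have hm2 : z₂ ≠ m := by intro h; apply hne; rw [hm_def] at h; linarith
  have claim : ∀ z : ℝ, 0 ≤ z → z ≠ m →
      ((U x - x * z : ℝ) : EReal) < extendedV V V0 z := by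
    intro z hz hzm
    unfold extendedV
    by_cases hzpos : 0 < z
    · rw [if_pos hzpos]
      have hxne : x ≠ I z := by
        intro he
        apply hzm
        rw [← hI_left z hzpos, ← he, hxm]
      exact_mod_cast V_gt_of hU_conc hU_deriv hV hI_pos hI_left hzpos hx hxne
    · have hz0 : z = 0 := le_antisymm (not_lt.mp hzpos) hz
      rw [if_neg hzpos, hz0]
      have : (U x - x * 0 : ℝ) = U x := by ring
      rw [this]
      exact hUlt x hx
  have k1 := claim z₁ h1 hm1
  have k2 := claim z₂ h2 hm2
  have harith : (U x - x * m) + (U x - x * m) = (U x - x * z₁) + (U x - x * z₂) := by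
    rw [hm_def]; ring
  rw [hWm, ← EReal.coe_add, harith, EReal.coe_add]
  exact EReal.add_lt_add k1 k2
lemma coe_ennreal_ne_top_eq {p : ℝ≥0∞} (hp : p ≠ ⊤) :
    ((p : ℝ≥0∞) : EReal) = ((p.toReal : ℝ) : EReal) := by
  conv_lhs => rw [← ENNReal.ofReal_toReal hp]
  rw [EReal.coe_ennreal_ofReal, max_eq_left ENNReal.toReal_nonneg]

/-- Fix `y > 0` and a nonempty convex `D ⊆ L¹₊(P) × ℝ`, and set
`J(f,c) := E[V(y·f)] + y·c` (with `V(0) := U(∞)` on `{f = 0}`; the expectation is well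
defined in `(−∞,∞]` since `V(z) ≥ U(1) − z`). If `(f₁,c₁)` and `(f₂,c₂)` both attain the
infimum of `J` over `D` and this infimum is finite, then `f₁ = f₂` `P`-a.s. -/
theorem dual_minimizer_density_unique
    {Ω : Type*} [MeasurableSpace Ω] (P : Measure Ω) [IsProbabilityMeasure P]
    (U U' V I : ℝ → ℝ)
    (hU_incr : StrictMonoOn U (Set.Ioi 0))
    (hU_conc : StrictConcaveOn ℝ (Set.Ioi 0) U)
    (hU_deriv : ∀ x ∈ Set.Ioi (0:ℝ), HasDerivAt U (U' x) x)
    (hU'_cont : ContinuousOn U' (Set.Ioi 0))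
    (hInada_zero : Filter.Tendsto U' (nhdsWithin 0 (Set.Ioi 0)) Filter.atTop)
    (hInada_inf : Filter.Tendsto U' Filter.atTop (nhds 0))
    (hU_pos : ∃ x > 0, 0 < U x)
    (hV : ∀ y > 0, IsLUB {z : ℝ | ∃ x > 0, z = U x - x * y} (V y))
    (hI_pos : ∀ y > 0, 0 < I y)
    (hI_left : ∀ y > 0, U' (I y) = y)
    (hI_right : ∀ x > 0, I (U' x) = x)
    (V0 : EReal) (hV0 : Filter.Tendsto (fun x => (U x : EReal)) Filter.atTop (nhds V0))
    (y : ℝ) (hy : 0 < y)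
    (D : Set ((Ω → ℝ) × ℝ))
    (hD_ne : D.Nonempty)
    (hD_mem : ∀ p ∈ D, Integrable p.1 P ∧ ∀ ω, 0 ≤ p.1 ω)
    (hD_conv : ∀ p ∈ D, ∀ q ∈ D, ∀ a b : ℝ, 0 ≤ a → 0 ≤ b → a + b = 1 →
      ((fun ω => a * p.1 ω + b * q.1 ω), a * p.2 + b * q.2) ∈ D)
    (J : (Ω → ℝ) × ℝ → EReal)
    (hJ_def : ∀ p, J p =
      erealExpectation P (fun ω => extendedV V V0 (y * p.1 ω)) + ((y * p.2 : ℝ) : EReal))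
    (f₁ f₂ : Ω → ℝ) (c₁ c₂ : ℝ)
    (h₁ : (f₁, c₁) ∈ D) (h₂ : (f₂, c₂) ∈ D)
    (hmin₁ : ∀ p ∈ D, J (f₁, c₁) ≤ J p)
    (hmin₂ : ∀ p ∈ D, J (f₂, c₂) ≤ J p)
    (hfin_bot : J (f₁, c₁) ≠ ⊥) (hfin_top : J (f₁, c₁) ≠ ⊤) :
    f₁ =ᵐ[P] f₂ := by
  classical
  obtain ⟨hf₁_int, hf₁_nn⟩ := hD_mem _ h₁
  obtain ⟨hf₂_int, hf₂_nn⟩ := hD_mem _ h₂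
  have hUlt : ∀ x > 0, ((U x : ℝ) : EReal) < V0 := fun x hx => U_lt_V0_of hU_incr hV0 hx
  have hW_anti : Antitone (extendedV V V0) := extendedV_antitone hV hUlt
  have hW_meas : Measurable (extendedV V V0) := hW_anti.measurable
  -- lower bound
  have hW_lb : ∀ z : ℝ, 0 ≤ z → ((U 1 - z : ℝ) : EReal) ≤ extendedV V V0 z := by
    intro z hz
    unfold extendedV
    by_cases hzp : 0 < z
    · rw [if_pos hzp]
      have h1 : U 1 - 1 * z ≤ V z := (hV z hzp).1 ⟨1, one_pos, rfl⟩
      exact_mod_cast (by linarith : U 1 - z ≤ V z)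
    · have hz0 : z = 0 := le_antisymm (not_lt.mp hzp) hz
      rw [if_neg hzp, hz0]
      refine le_trans ?_ (hUlt 1 one_pos).le
      norm_num
  have hW_ne_bot : ∀ z : ℝ, 0 ≤ z → extendedV V V0 z ≠ ⊥ := by
    intro z hz hb
    have h := hW_lb z hz
    rw [hb, le_bot_iff] at h
    exact EReal.coe_ne_bot _ h
  -- measurability of the abs-max map
  have habs_meas : Measurable (EReal.abs) := by
    apply EReal.measurable_of_measurable_real
    simp only [EReal.abs_def]
    exact ENNReal.measurable_ofReal.comp measurable_abs
  have hmax_meas : Measurable (fun x : EReal => (max x 0).abs) :=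
    habs_meas.comp (measurable_id.max measurable_const)
  -- neg-part finiteness
  have negfin : ∀ (f : Ω → ℝ), Integrable f P → (∀ ω, 0 ≤ f ω) →
      ∫⁻ ω, (min (extendedV V V0 (y * f ω)) 0).abs ∂P < ⊤ := by
    intro f hint hnn
    have hb : Integrable (fun ω => |U 1| + y * f ω) P :=
      (integrable_const _).add (hint.const_mul y)
    refine lt_of_le_of_lt (lintegral_mono fun ω => ?_) (lintegral_ofReal_lt_top hb)
    have hnn' : 0 ≤ y * f ω := mul_nonneg hy.le (hnn ω)
    have hlb := hW_lb _ hnn'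
    set x := extendedV V V0 (y * f ω) with hxdef
    clear_value x
    induction x using EReal.rec with
    | bot => exact absurd (le_bot_iff.mp hlb) (EReal.coe_ne_bot _)
    | coe r =>
      have hcr : U 1 - y * f ω ≤ r := by exact_mod_cast hlb
      rcases le_total r 0 with h | h
      · rw [min_eq_left (by exact_mod_cast h), EReal.abs_def]
        apply ENNReal.ofReal_le_ofReal
        rw [abs_of_nonpos h]
        have := neg_abs_le (U 1)
        linarith
      · rw [min_eq_right (by exact_mod_cast h), EReal.abs_zero]
        exact zero_le
    | top =>
      rw [min_eq_right le_top, EReal.abs_zero]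
      exact zero_le
  -- J values and equality of minima
  have hJeq : J (f₁, c₁) = J (f₂, c₂) := le_antisymm (hmin₁ _ h₂) (hmin₂ _ h₁)
  have hJ1 : J (f₁, c₁) =
      erealExpectation P (fun ω => extendedV V V0 (y * f₁ ω)) + ((y * c₁ : ℝ) : EReal) :=
    hJ_def (f₁, c₁)
  have hJ2 : J (f₂, c₂) =
      erealExpectation P (fun ω => extendedV V V0 (y * f₂ ω)) + ((y * c₂ : ℝ) : EReal) :=
    hJ_def (f₂, c₂)
  -- pos-part finiteness
  have posfin : ∀ (f : Ω → ℝ) (c : ℝ), Integrable f P → (∀ ω, 0 ≤ f ω) →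
      erealExpectation P (fun ω => extendedV V V0 (y * f ω)) + ((y * c : ℝ) : EReal) ≠ ⊤ →
      ∫⁻ ω, (max (extendedV V V0 (y * f ω)) 0).abs ∂P < ⊤ := by
    intro f c hint hnn hne
    by_contra h
    apply hne
    have hA : ∫⁻ ω, (max (extendedV V V0 (y * f ω)) 0).abs ∂P = ⊤ := top_le_iff.mp (not_lt.mp h)
    have hB := negfin f hint hnn
    unfold erealExpectation
    rw [hA, EReal.coe_ennreal_top, coe_ennreal_ne_top_eq hB.ne, EReal.top_sub_coe,
      EReal.top_add_coe]
  have posfin1 := posfin f₁ c₁ hf₁_int hf₁_nn (hJ1 ▸ hfin_top)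
  have posfin2 := posfin f₂ c₂ hf₂_int hf₂_nn (hJ2 ▸ hJeq ▸ hfin_top)
  -- a.e. finiteness and real versions
  have haefin : ∀ (f : Ω → ℝ), Integrable f P → (∀ ω, 0 ≤ f ω) →
      (∫⁻ ω, (max (extendedV V V0 (y * f ω)) 0).abs ∂P < ⊤) →
      (fun ω => extendedV V V0 (y * f ω)) =ᵐ[P]
        (fun ω => (((extendedV V V0 (y * f ω)).toReal : ℝ) : EReal)) := by
    intro f hint hnn hfin
    have hmeas : AEMeasurable (fun ω => extendedV V V0 (y * f ω)) P :=
      hW_meas.comp_aemeasurable (hint.aemeasurable.const_mul y)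
    have hmax : AEMeasurable (fun ω => (max (extendedV V V0 (y * f ω)) 0).abs) P :=
      hmax_meas.comp_aemeasurable hmeas
    filter_upwards [ae_lt_top' hmax hfin.ne] with ω hω
    have hne_top : extendedV V V0 (y * f ω) ≠ ⊤ := by
      intro h
      rw [h] at hω
      simp at hω
    exact (EReal.coe_toReal hne_top (hW_ne_bot _ (mul_nonneg hy.le (hnn ω)))).symm
  have haeeq1 := haefin f₁ hf₁_int hf₁_nn posfin1
  have haeeq2 := haefin f₂ hf₂_int hf₂_nn posfin2
  set φ₁ : Ω → ℝ := fun ω => (extendedV V V0 (y * f₁ ω)).toReal with hφ₁def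
  set φ₂ : Ω → ℝ := fun ω => (extendedV V V0 (y * f₂ ω)).toReal with hφ₂def
  -- integrability of φ₁, φ₂
  have hφint : ∀ (f : Ω → ℝ), Integrable f P → (∀ ω, 0 ≤ f ω) →
      (∫⁻ ω, (max (extendedV V V0 (y * f ω)) 0).abs ∂P < ⊤) →
      Integrable (fun ω => (extendedV V V0 (y * f ω)).toReal) P := by
    intro f hint hnn hfin
    have hmeas : AEMeasurable (fun ω => extendedV V V0 (y * f ω)) P :=
      hW_meas.comp_aemeasurable (hint.aemeasurable.const_mul y)
    have hmax : AEMeasurable (fun ω => (max (extendedV V V0 (y * f ω)) 0).abs) P :=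
      hmax_meas.comp_aemeasurable hmeas
    refine ⟨(measurable_ereal_toReal.comp_aemeasurable hmeas).aestronglyMeasurable, ?_⟩
    have hbound : ∀ᵐ ω ∂P, (‖(extendedV V V0 (y * f ω)).toReal‖₊ : ℝ≥0∞) ≤
        (max (extendedV V V0 (y * f ω)) 0).abs + (min (extendedV V V0 (y * f ω)) 0).abs := by
      filter_upwards [haefin f hint hnn hfin] with ω hω
      set r : ℝ := (extendedV V V0 (y * f ω)).toReal
      rw [hω, ereal_abs_max_coe, ereal_abs_min_coe, ← enorm_eq_nnnorm, ← ofReal_norm,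
        Real.norm_eq_abs]
      rcases le_total r 0 with h | h
      · rw [abs_of_nonpos h]
        exact le_add_self.trans (add_le_add_left (le_refl _) _)
      · rw [abs_of_nonneg h]
        exact le_self_add
    calc ∫⁻ ω, (‖(extendedV V V0 (y * f ω)).toReal‖₊ : ℝ≥0∞) ∂P
        ≤ ∫⁻ ω, ((max (extendedV V V0 (y * f ω)) 0).abs
            + (min (extendedV V V0 (y * f ω)) 0).abs) ∂P := lintegral_mono_ae hbound
      _ = (∫⁻ ω, (max (extendedV V V0 (y * f ω)) 0).abs ∂P)
            + ∫⁻ ω, (min (extendedV V V0 (y * f ω)) 0).abs ∂P :=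
          lintegral_add_left' hmax _
      _ < ⊤ := ENNReal.add_lt_top.mpr ⟨hfin, negfin f hint hnn⟩
  have hφ₁int : Integrable φ₁ P := hφint f₁ hf₁_int hf₁_nn posfin1
  have hφ₂int : Integrable φ₂ P := hφint f₂ hf₂_int hf₂_nn posfin2
  have hE1val : erealExpectation P (fun ω => extendedV V V0 (y * f₁ ω))
      = ((∫ ω, φ₁ ω ∂P : ℝ) : EReal) :=
    (erealExpectation_congr P haeeq1).trans (erealExpectation_coe P hφ₁int)
  have hE2val : erealExpectation P (fun ω => extendedV V V0 (y * f₂ ω))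
      = ((∫ ω, φ₂ ω ∂P : ℝ) : EReal) :=
    (erealExpectation_congr P haeeq2).trans (erealExpectation_coe P hφ₂int)
  -- midpoint element
  have hgD : ((fun ω => 2⁻¹ * f₁ ω + 2⁻¹ * f₂ ω), 2⁻¹ * c₁ + 2⁻¹ * c₂) ∈ D :=
    hD_conv _ h₁ _ h₂ 2⁻¹ 2⁻¹ (by norm_num) (by norm_num) (by norm_num)
  set g : Ω → ℝ := fun ω => 2⁻¹ * f₁ ω + 2⁻¹ * f₂ ω with hgdef
  have hg_int : Integrable g P := (hf₁_int.const_mul _).add (hf₂_int.const_mul _)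
  have hg_nn : ∀ ω, 0 ≤ g ω := fun ω =>
    add_nonneg (mul_nonneg (by norm_num) (hf₁_nn ω)) (mul_nonneg (by norm_num) (hf₂_nn ω))
  set φmid : Ω → ℝ := fun ω => (extendedV V V0 (y * g ω)).toReal with hφmiddef
  -- pointwise comparisons
  have hptwise_lt : ∀ ω, f₁ ω ≠ f₂ ω →
      extendedV V V0 (y * g ω) + extendedV V V0 (y * g ω)
        < extendedV V V0 (y * f₁ ω) + extendedV V V0 (y * f₂ ω) := by
    intro ω hne
    have hzne : y * f₁ ω ≠ y * f₂ ω := fun h => hne (mul_left_cancel₀ hy.ne' h)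
    have harg : y * g ω = (y * f₁ ω + y * f₂ ω) / 2 := by simp only [hgdef]; ring
    rw [harg]
    exact extendedV_strict_midpoint hU_conc hU_deriv hV hI_pos hI_left hUlt
      (mul_nonneg hy.le (hf₁_nn ω)) (mul_nonneg hy.le (hf₂_nn ω)) hzne
  have hptwise_le : ∀ ω, extendedV V V0 (y * g ω) + extendedV V V0 (y * g ω)
      ≤ extendedV V V0 (y * f₁ ω) + extendedV V V0 (y * f₂ ω) := by
    intro ω
    by_cases hne : f₁ ω = f₂ ω
    · have e : y * g ω = y * f₁ ω := by simp only [hgdef]; rw [← hne]; ring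
      have e2 : y * f₂ ω = y * f₁ ω := by rw [← hne]
      rw [e, e2]
    · exact (hptwise_lt ω hne).le
  -- a.e. properties of the midpoint integrand
  have haemid : ∀ᵐ ω ∂P,
      extendedV V V0 (y * g ω) = ((φmid ω : ℝ) : EReal)
      ∧ φmid ω * 2 ≤ φ₁ ω + φ₂ ω
      ∧ U 1 - y * g ω ≤ φmid ω := by
    filter_upwards [haeeq1, haeeq2] with ω e1 e2
    have e1' : extendedV V V0 (y * f₁ ω) = ((φ₁ ω : ℝ) : EReal) := e1
    have e2' : extendedV V V0 (y * f₂ ω) = ((φ₂ ω : ℝ) : EReal) := e2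
    have hle := hptwise_le ω
    rw [e1', e2', ← EReal.coe_add] at hle
    have hxb : extendedV V V0 (y * g ω) ≠ ⊥ := hW_ne_bot _ (mul_nonneg hy.le (hg_nn ω))
    have hxt : extendedV V V0 (y * g ω) ≠ ⊤ := by
      intro h
      rw [h, EReal.top_add_top, top_le_iff] at hle
      exact EReal.coe_ne_top _ hle
    have hxr : extendedV V V0 (y * g ω) = ((φmid ω : ℝ) : EReal) :=
      (EReal.coe_toReal hxt hxb).symm
    refine ⟨hxr, ?_, ?_⟩
    · rw [hxr, ← EReal.coe_add] at hle
      have := EReal.coe_le_coe_iff.mp hle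
      linarith
    · have hl := hW_lb (y * g ω) (mul_nonneg hy.le (hg_nn ω))
      rw [hxr] at hl
      have := EReal.coe_le_coe_iff.mp hl
      linarith
  -- integrability of φmid
  have hφmid_int : Integrable φmid P := by
    have hmeas : AEMeasurable (fun ω => extendedV V V0 (y * g ω)) P :=
      hW_meas.comp_aemeasurable (hg_int.aemeasurable.const_mul y)
    have hbint : Integrable (fun ω => |U 1| + y * g ω + |φ₁ ω| + |φ₂ ω|) P :=
      (((integrable_const _).add (hg_int.const_mul y)).add hφ₁int.abs).add hφ₂int.abs
    refine Integrable.mono' hbint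
      (measurable_ereal_toReal.comp_aemeasurable hmeas).aestronglyMeasurable ?_
    filter_upwards [haemid] with ω hm
    obtain ⟨-, hub, hlb2⟩ := hm
    rw [Real.norm_eq_abs, abs_le]
    have hyg : 0 ≤ y * g ω := mul_nonneg hy.le (hg_nn ω)
    have a1 := abs_nonneg (φ₁ ω)
    have a2 := abs_nonneg (φ₂ ω)
    have l1 := le_abs_self (φ₁ ω)
    have l2 := le_abs_self (φ₂ ω)
    have n1 := neg_abs_le (U 1)
    have n2 := abs_nonneg (U 1)
    constructor
    · linarith
    · linarith
  have haemid_eq : (fun ω => extendedV V V0 (y * g ω)) =ᵐ[P]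
      (fun ω => ((φmid ω : ℝ) : EReal)) := haemid.mono fun ω h => h.1
  have hEmidval : erealExpectation P (fun ω => extendedV V V0 (y * g ω))
      = ((∫ ω, φmid ω ∂P : ℝ) : EReal) :=
    (erealExpectation_congr P haemid_eq).trans (erealExpectation_coe P hφmid_int)
  -- real form of the J values
  have hJ1r : J (f₁, c₁) = ((∫ ω, φ₁ ω ∂P + y * c₁ : ℝ) : EReal) := by
    rw [hJ1, hE1val, ← EReal.coe_add]
  have hJ2r : J (f₂, c₂) = ((∫ ω, φ₂ ω ∂P + y * c₂ : ℝ) : EReal) := by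
    rw [hJ2, hE2val, ← EReal.coe_add]
  have hJg : J (g, 2⁻¹ * c₁ + 2⁻¹ * c₂)
      = ((∫ ω, φmid ω ∂P + y * (2⁻¹ * c₁ + 2⁻¹ * c₂) : ℝ) : EReal) := by
    rw [hJ_def (g, 2⁻¹ * c₁ + 2⁻¹ * c₂)]
    show erealExpectation P (fun ω => extendedV V V0 (y * g ω))
      + ((y * (2⁻¹ * c₁ + 2⁻¹ * c₂) : ℝ) : EReal) = _
    rw [hEmidval, ← EReal.coe_add]
  -- conclude via strict convexity
  have hmle := hmin₁ _ hgD
  rw [hJ1r, hJg] at hmle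
  have hmle' := EReal.coe_le_coe_iff.mp hmle
  have heq : ∫ ω, φ₁ ω ∂P + y * c₁ = ∫ ω, φ₂ ω ∂P + y * c₂ := by
    have h := hJeq
    rw [hJ1r, hJ2r] at h
    exact_mod_cast h
  have hψ_int : Integrable (fun ω => φ₁ ω + φ₂ ω - 2 * φmid ω) P :=
    (hφ₁int.add hφ₂int).sub (hφmid_int.const_mul 2)
  have hψ_nonneg : 0 ≤ᵐ[P] fun ω => φ₁ ω + φ₂ ω - 2 * φmid ω := by
    filter_upwards [haemid] with ω h
    have := h.2.1
    simp only [Pi.zero_apply]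
    linarith
  have hψ_integral : ∫ ω, (φ₁ ω + φ₂ ω - 2 * φmid ω) ∂P ≤ 0 := by
    have hsplit : ∫ ω, (φ₁ ω + φ₂ ω - 2 * φmid ω) ∂P
        = ∫ ω, (φ₁ ω + φ₂ ω) ∂P - ∫ ω, (2 * φmid ω) ∂P :=
      integral_sub (hφ₁int.add hφ₂int) (hφmid_int.const_mul 2)
    have hadd : ∫ ω, (φ₁ ω + φ₂ ω) ∂P = ∫ ω, φ₁ ω ∂P + ∫ ω, φ₂ ω ∂P :=
      integral_add hφ₁int hφ₂int
    have hconst : ∫ ω, (2 * φmid ω) ∂P = 2 * ∫ ω, φmid ω ∂P := integral_const_mul 2 φmid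
    rw [hsplit, hadd, hconst]
    linarith
  have hψ_zero : (fun ω => φ₁ ω + φ₂ ω - 2 * φmid ω) =ᵐ[P] 0 :=
    (integral_eq_zero_iff_of_nonneg_ae hψ_nonneg hψ_int).mp
      (le_antisymm hψ_integral (integral_nonneg_of_ae hψ_nonneg))
  filter_upwards [hψ_zero, haeeq1, haeeq2, haemid] with ω e0 e1 e2 em
  by_contra hne
  have hlt := hptwise_lt ω hne
  have e1' : extendedV V V0 (y * f₁ ω) = ((φ₁ ω : ℝ) : EReal) := e1
  have e2' : extendedV V V0 (y * f₂ ω) = ((φ₂ ω : ℝ) : EReal) := e2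
  rw [em.1, e1', e2', ← EReal.coe_add, ← EReal.coe_add] at hlt
  have hr := EReal.coe_lt_coe_iff.mp hlt
  have e0' : φ₁ ω + φ₂ ω - 2 * φmid ω = 0 := e0
  linarith
end

section
/- For every ε > 0 there exists a constant C > 0 such that −V(z) ≤ C + ε·z for all z > 0. Consequently, lim_{y→∞} (1/y) · sup { E[max(−V(y·g), 0)] : g : Ω → [0,∞) measurable with E[g] ≤ 1 } = 0, where V(y·g(ω)) is interpreted as V(0) = U(∞) on {g = 0}. -/
open Filter Set Topology MeasureTheory
open scoped ENNReal

/-- For every `ε > 0` there is `C > 0` with `−V(z) ≤ C + ε·z` for all `z > 0`.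
Consequently `(1/y)·sup { E[max(−V(y·g),0)] : g ≥ 0 measurable, E[g] ≤ 1 } → 0` as `y → ∞`
(on `{g = 0}` the integrand is `max(−V(0),0) = 0` since `V(0) = U(∞) > 0`). -/
theorem neg_V_sublinear_and_sup_vanishes
    {Ω : Type*} [MeasurableSpace Ω] (P : Measure Ω) [IsProbabilityMeasure P]
    (U U' V I : ℝ → ℝ)
    (hU_incr : StrictMonoOn U (Set.Ioi 0))
    (hU_conc : StrictConcaveOn ℝ (Set.Ioi 0) U)
    (hU_deriv : ∀ x ∈ Set.Ioi (0:ℝ), HasDerivAt U (U' x) x)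
    (hU'_cont : ContinuousOn U' (Set.Ioi 0))
    (hInada_zero : Filter.Tendsto U' (nhdsWithin 0 (Set.Ioi 0)) Filter.atTop)
    (hInada_inf : Filter.Tendsto U' Filter.atTop (nhds 0))
    (hU_pos : ∃ x > 0, 0 < U x)
    (hV : ∀ y > 0, IsLUB {z : ℝ | ∃ x > 0, z = U x - x * y} (V y))
    (hI_pos : ∀ y > 0, 0 < I y)
    (hI_left : ∀ y > 0, U' (I y) = y)
    (hI_right : ∀ x > 0, I (U' x) = x) :
    (∀ ε : ℝ, 0 < ε → ∃ C : ℝ, 0 < C ∧ ∀ z : ℝ, 0 < z → -(V z) ≤ C + ε * z) ∧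
    Filter.Tendsto
      (fun y : ℝ => (1 / y) *
        sSup {r : ℝ | ∃ g : Ω → ℝ, Measurable g ∧ (∀ ω, 0 ≤ g ω) ∧
          (∫⁻ ω, ENNReal.ofReal (g ω) ∂P) ≤ 1 ∧
          r = ∫ ω, (if g ω = 0 then 0 else max (-(V (y * g ω))) 0) ∂P})
      Filter.atTop (nhds 0) := by

  have key : ∀ ε : ℝ, 0 < ε → ∃ C : ℝ, 0 < C ∧ ∀ z : ℝ, 0 < z → -(V z) ≤ C + ε * z := by
    intro ε hε
    refine ⟨max 1 (-(U ε)), lt_of_lt_of_le one_pos (le_max_left _ _), ?_⟩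
    intro z hz
    have hmem : U ε - ε * z ∈ {w : ℝ | ∃ x > 0, w = U x - x * z} := ⟨ε, hε, rfl⟩
    have h1 := (hV z hz).1 hmem
    have h2 := le_max_right 1 (-(U ε))
    linarith
  refine ⟨key, ?_⟩
  -- general upper bound for elements of the set
  have hub : ∀ (ε C y : ℝ), 0 < ε → 0 < C →
      (∀ z : ℝ, 0 < z → -(V z) ≤ C + ε * z) → 0 < y →
      ∀ r ∈ {r : ℝ | ∃ g : Ω → ℝ, Measurable g ∧ (∀ ω, 0 ≤ g ω) ∧
          (∫⁻ ω, ENNReal.ofReal (g ω) ∂P) ≤ 1 ∧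
          r = ∫ ω, (if g ω = 0 then 0 else max (-(V (y * g ω))) 0) ∂P},
      r ≤ C + ε * y := by
    rintro ε C y hε hC hB hy r ⟨g, hg_meas, hg_nonneg, hg_int, rfl⟩
    have hgi : Integrable g P := by
      refine ⟨hg_meas.aestronglyMeasurable, ?_⟩
      rw [hasFiniteIntegral_iff_ofReal (Filter.Eventually.of_forall hg_nonneg)]
      exact lt_of_le_of_lt hg_int ENNReal.one_lt_top
    have hgint : ∫ ω, g ω ∂P ≤ 1 := by
      rw [integral_eq_lintegral_of_nonneg_ae (Filter.Eventually.of_forall hg_nonneg)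
        hg_meas.aestronglyMeasurable]
      calc (∫⁻ ω, ENNReal.ofReal (g ω) ∂P).toReal
          ≤ (1 : ℝ≥0∞).toReal := ENNReal.toReal_mono ENNReal.one_ne_top hg_int
        _ = 1 := by simp
    have hint2 : Integrable (fun ω => C + ε * y * g ω) P :=
      (integrable_const C).add (hgi.const_mul (ε * y))
    have hle : (∫ ω, (if g ω = 0 then 0 else max (-(V (y * g ω))) 0) ∂P)
        ≤ ∫ ω, (C + ε * y * g ω) ∂P := by
      refine integral_mono_of_nonneg (Filter.Eventually.of_forall fun ω => ?_) hint2
        (Filter.Eventually.of_forall fun ω => ?_)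
      · by_cases h : g ω = 0
        · simp [h]
        · simp only [h, if_false]
          exact le_max_right _ _
      · by_cases h : g ω = 0
        · simp only [h, if_true, mul_zero, add_zero]
          positivity
        · have hgω : 0 < g ω := lt_of_le_of_ne (hg_nonneg ω) (Ne.symm h)
          simp only [h, if_false]
          have h1 := hB (y * g ω) (mul_pos hy hgω)
          have h2 : (0:ℝ) ≤ C + ε * y * g ω := by positivity
          refine max_le ?_ h2
          rw [mul_assoc] at *
          linarith
    have heq : ∫ ω, (C + ε * y * g ω) ∂P = C + ε * y * ∫ ω, g ω ∂P := by
      rw [integral_add (integrable_const C) (hgi.const_mul (ε * y)),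
        integral_const, integral_const_mul]
      simp
    have hεy : 0 ≤ ε * y := le_of_lt (mul_pos hε hy)
    nlinarith [hle, heq, hgint]
  -- zero is in the set, giving nonnegativity of the sup
  have hzero : ∀ y : ℝ, (0:ℝ) ∈ {r : ℝ | ∃ g : Ω → ℝ, Measurable g ∧ (∀ ω, 0 ≤ g ω) ∧
          (∫⁻ ω, ENNReal.ofReal (g ω) ∂P) ≤ 1 ∧
          r = ∫ ω, (if g ω = 0 then 0 else max (-(V (y * g ω))) 0) ∂P} := by
    intro y
    exact ⟨fun _ => 0, measurable_const, fun _ => le_refl 0, by simp, by simp⟩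
  rw [NormedAddCommGroup.tendsto_nhds_zero]
  intro ε hε
  obtain ⟨C, hC, hB⟩ := key (ε / 2) (half_pos hε)
  filter_upwards [eventually_gt_atTop (2 * C / ε)] with y hy
  have hy0 : 0 < y := lt_trans (by positivity) hy
  set s := sSup {r : ℝ | ∃ g : Ω → ℝ, Measurable g ∧ (∀ ω, 0 ≤ g ω) ∧
          (∫⁻ ω, ENNReal.ofReal (g ω) ∂P) ≤ 1 ∧
          r = ∫ ω, (if g ω = 0 then 0 else max (-(V (y * g ω))) 0) ∂P} with hs
  have hub' := hub (ε / 2) C y (half_pos hε) hC hB hy0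
  have hsle : s ≤ C + ε / 2 * y := Real.sSup_le hub' (by positivity)
  have hs0 : 0 ≤ s := le_csSup ⟨C + ε / 2 * y, fun x hx => hub' x hx⟩ (hzero y)
  have hCy : C < ε * y / 2 := by
    rw [div_lt_iff₀ hε] at hy
    linarith
  have hlt : 1 / y * s < ε := by
    rw [show (1 / y) * s = s / y by ring, div_lt_iff₀ hy0]
    nlinarith
  rw [Real.norm_eq_abs, abs_of_nonneg (by positivity)]
  exact hlt
end
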